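/- If K_i are prime cubic critical portraits and K_i → K in CrP, then K is prime. -/

import Mathlib

noncomputable section

open Filter Metric

/-- Points of the unit circle `S`. -/
abbrev SPt : Type := {z : ℂ // ‖z‖ = 1}

/-- The unit circle, as a subset of `ℂ`. -/
def circleSet : Set ℂ := {z : ℂ | ‖z‖ = 1}

/-- The open unit disk `D`. -/
def openDisk : Set ℂ := Metric.ball (0 : ℂ) 1

/-- The map `σ_d : S → S`, `z ↦ z ^ d`. -/
def sigmaS (d : ℕ) (z : SPt) : SPt :=
  ⟨(z : ℂ) ^ d, by rw [norm_pow, z.2, one_pow]⟩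

/-- A chord, identified with the unordered pair of its endpoints. -/
abbrev Chord : Type := Sym2 SPt

/-- The closed straight segment in `ℂ` spanned by a chord. -/
def chordSet : Chord → Set ℂ :=
  Sym2.lift ⟨fun a b => segment ℝ (a : ℂ) (b : ℂ), fun a b => segment_symm ℝ _ _⟩

/-- The image chord `σ_d(ℓ)`. -/
def chordMap (d : ℕ) : Chord → Chord := Sym2.map (sigmaS d)

/-- Two (distinct) chords cross if they intersect in the open unit disk. -/
def Cross (c₁ c₂ : Chord) : Prop :=
  c₁ ≠ c₂ ∧ (chordSet c₁ ∩ chordSet c₂ ∩ openDisk).Nonempty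

/-- The length `|ℓ|` of a chord: the normalized length of the shorter arc
subtended by its endpoints (total circle length 1). -/
def chordLength : Chord → ℝ :=
  Sym2.lift ⟨fun a b => |Complex.arg ((a : ℂ) / (b : ℂ))| / (2 * Real.pi), by
    intro a b
    dsimp only
    have h : ((b : ℂ) / (a : ℂ)) = ((a : ℂ) / (b : ℂ))⁻¹ := (inv_div _ _).symm
    rw [h, Complex.arg_inv]
    split_ifs with hpi
    · rw [hpi]
    · rw [abs_neg]⟩

/-- A lamination: a family of pairwise non-crossing chords containing all
degenerate chords, whose union is compact. -/
structure Lamination : Type where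
  leaves : Set Chord
  no_cross : ∀ ℓ₁ ∈ leaves, ∀ ℓ₂ ∈ leaves, ¬ Cross ℓ₁ ℓ₂
  diag_mem : ∀ z : SPt, Sym2.diag z ∈ leaves
  plus_compact : IsCompact (⋃ ℓ ∈ leaves, chordSet ℓ)

/-- `Λ⁺`, the union of all leaves of `Λ`. -/
def Lamination.plus (Λ : Lamination) : Set ℂ := ⋃ ℓ ∈ Λ.leaves, chordSet ℓ

/-- Sibling `σ_d`-invariance of a lamination. -/
def Lamination.Invariant (Λ : Lamination) (d : ℕ) : Prop :=
  (∀ ℓ ∈ Λ.leaves, chordMap d ℓ ∈ Λ.leaves) ∧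
  (∀ ℓ ∈ Λ.leaves, ∃ p ∈ Λ.leaves, chordMap d p = ℓ) ∧
  (∀ ℓ ∈ Λ.leaves, ¬ (chordMap d ℓ).IsDiag →
    ∃ s : Fin d → Chord, (∃ i, s i = ℓ) ∧ (∀ i, s i ∈ Λ.leaves) ∧
      Function.Injective s ∧
      (∀ i j, i ≠ j → chordSet (s i) ∩ chordSet (s j) = ∅) ∧
      (∀ i, chordMap d (s i) = chordMap d ℓ))

/-- A lamination is nonempty if it has a nondegenerate leaf. -/
def Lamination.NonemptyLam (Λ : Lamination) : Prop := ∃ ℓ ∈ Λ.leaves, ¬ ℓ.IsDiag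

/-- A gap of `Λ`: the closure of a connected component of `D ∖ Λ⁺`. -/
def IsGap (Λ : Lamination) (G : Set ℂ) : Prop :=
  ∃ x ∈ openDisk \ Λ.plus, G = closure (connectedComponentIn (openDisk \ Λ.plus) x)

/-- A finite gap: a gap meeting the circle in finitely many points. -/
def FiniteGap (Λ : Lamination) (G : Set ℂ) : Prop := IsGap Λ G ∧ (G ∩ circleSet).Finite

/-- `ℓ` is an edge of `G`: a maximal nondegenerate straight segment (with
endpoints on the circle) contained in the boundary of `G`. -/
def IsEdge (G : Set ℂ) (ℓ : Chord) : Prop :=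
  ¬ ℓ.IsDiag ∧ chordSet ℓ ⊆ frontier G ∧
    ∀ ℓ' : Chord, chordSet ℓ ⊆ chordSet ℓ' → chordSet ℓ' ⊆ frontier G →
      chordSet ℓ' = chordSet ℓ

/-- `σ_d(G)` for a set `G`: the convex hull of the image of `G ∩ S`. -/
def gapImage (d : ℕ) (G : Set ℂ) : Set ℂ :=
  convexHull ℝ ((fun z : ℂ => z ^ d) '' (G ∩ circleSet))

/-- A lap of `Λ`: a finite gap, or (the segment of) a nondegenerate leaf not
contained in the boundary of a finite gap. -/
def IsLap (Λ : Lamination) (G : Set ℂ) : Prop :=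
  FiniteGap Λ G ∨
    ∃ ℓ ∈ Λ.leaves, ¬ ℓ.IsDiag ∧ G = chordSet ℓ ∧
      ∀ H : Set ℂ, FiniteGap Λ H → ¬ chordSet ℓ ⊆ frontier H

/-- Distance between chords (Hausdorff distance between their segments). -/
def chordDist (c₁ c₂ : Chord) : ℝ := Metric.hausdorffDist (chordSet c₁) (chordSet c₂)

/-- Hausdorff convergence `Λ_i → Λ` of laminations (leaf sets converge in the
Hausdorff metric on the compact space of chords). -/
def LamTendsto (Λi : ℕ → Lamination) (Λ : Lamination) : Prop :=
  ∀ ε > (0 : ℝ), ∀ᶠ n in atTop,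
    (∀ ℓ ∈ (Λi n).leaves, ∃ ℓ' ∈ Λ.leaves, chordDist ℓ ℓ' < ε) ∧
    (∀ ℓ' ∈ Λ.leaves, ∃ ℓ ∈ (Λi n).leaves, chordDist ℓ ℓ' < ε)

/-- An isolated leaf of `Λ`: some neighborhood of it in the space of chords
contains no other leaf of `Λ`. -/
def IsolatedLeaf (Λ : Lamination) (ℓ : Chord) : Prop :=
  ℓ ∈ Λ.leaves ∧ ∃ ε > (0 : ℝ), ∀ ℓ' ∈ Λ.leaves, chordDist ℓ' ℓ < ε → ℓ' = ℓ

/-- A perfect lamination: no isolated leaves. -/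
def Lamination.PerfectLam (Λ : Lamination) : Prop := ∀ ℓ ∈ Λ.leaves, ¬ IsolatedLeaf Λ ℓ

/-- A set of chords closed under limits. -/
def ClosedChordSet (P : Set Chord) : Prop :=
  ∀ f : ℕ → Chord, (∀ n, f n ∈ P) → ∀ c : Chord,
    Tendsto (fun n => chordDist (f n) c) atTop (nhds 0) → c ∈ P

/-- A perfect set of chords: closed and with no isolated points. -/
def PerfectChordSet (P : Set Chord) : Prop :=
  ClosedChordSet P ∧ ∀ c ∈ P, ∀ ε > (0 : ℝ), ∃ c' ∈ P, c' ≠ c ∧ chordDist c c' < ε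

/-- The perfect part `Λᵖ` of `Λ`: the maximal perfect subset of its leaf set. -/
def perfectPart (Λ : Lamination) : Set Chord :=
  ⋃₀ {P : Set Chord | P ⊆ Λ.leaves ∧ PerfectChordSet P}

/-- A countable lamination: countably many nondegenerate leaves. -/
def Lamination.CountableLam (Λ : Lamination) : Prop :=
  {ℓ ∈ Λ.leaves | ¬ ℓ.IsDiag}.Countable

/-- `Λc` is a chief of `Λ`: a minimal-by-inclusion nonempty sibling
`σ_d`-invariant sublamination of `Λ`. -/
def IsChiefOf (d : ℕ) (Λc Λ : Lamination) : Prop :=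
  Λc.leaves ⊆ Λ.leaves ∧ Λc.Invariant d ∧ Λc.NonemptyLam ∧
    ∀ Λ' : Lamination, Λ'.leaves ⊆ Λc.leaves → Λ'.Invariant d → Λ'.NonemptyLam →
      Λ'.leaves = Λc.leaves

/-- A clean lamination: distinct non-disjoint leaves lie on the boundary of a
common finite gap. -/
def Lamination.Clean (Λ : Lamination) : Prop :=
  ∀ ℓ₁ ∈ Λ.leaves, ∀ ℓ₂ ∈ Λ.leaves, ℓ₁ ≠ ℓ₂ → (chordSet ℓ₁ ∩ chordSet ℓ₂).Nonempty →
    ∃ G : Set ℂ, FiniteGap Λ G ∧ chordSet ℓ₁ ⊆ frontier G ∧ chordSet ℓ₂ ⊆ frontier G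

/-- A limit lamination: a sibling `σ_3`-invariant lamination that is a limit of
clean sibling `σ_3`-invariant laminations. -/
def IsLimitLam (Λ : Lamination) : Prop :=
  Λ.Invariant 3 ∧
    ∃ Λi : ℕ → Lamination, (∀ n, (Λi n).Invariant 3 ∧ (Λi n).Clean) ∧ LamTendsto Λi Λ

/-- A chief: a chief of some nonempty limit lamination. -/
def IsChief (Λc : Lamination) : Prop :=
  ∃ Λ : Lamination, IsLimitLam Λ ∧ Λ.NonemptyLam ∧ IsChiefOf 3 Λc Λ

/-- A `σ_3`-critical chord. -/
def IsCritChord (c : Chord) : Prop := ¬ c.IsDiag ∧ (chordMap 3 c).IsDiag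

/-- An unordered pair of chords (candidate critical portrait). -/
abbrev Portrait : Type := Sym2 Chord

/-- A cubic critical portrait: an unordered pair of non-crossing
`σ_3`-critical chords. -/
def IsPortrait (K : Portrait) : Prop :=
  ∃ c y : Chord, K = s(c, y) ∧ IsCritChord c ∧ IsCritChord y ∧ ¬ Cross c y

/-- The space `CrP` of all cubic critical portraits. -/
def CrP : Set Portrait := {K | IsPortrait K}

/-- `I(ℓ)` for a critical chord `ℓ`: the open arc of length 1/3 cut off by `ℓ`
(the points of the circle strictly separated from the center by `ℓ`). -/
def Iarc (ℓ : Chord) : Set SPt :=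
  {z : SPt | (z : ℂ) ∉ chordSet ℓ ∧ (segment ℝ (0 : ℂ) (z : ℂ) ∩ chordSet ℓ).Nonempty}

/-- The forward orbit `{σ_3ⁿ(ℓ) : n ≥ 1}` of a critical chord `ℓ` (each image
is a single point of the circle). -/
def critOrbit (ℓ : Chord) : Set SPt :=
  {z : SPt | ∃ n, 1 ≤ n ∧ ∃ a ∈ ℓ, (sigmaS 3)^[n] a = z}

/-- A weak critical portrait. -/
def IsWeak (K : Portrait) : Prop :=
  IsPortrait K ∧ ∃ c y : Chord, K = s(c, y) ∧
    (critOrbit c ∩ Iarc y = ∅ ∨ critOrbit y ∩ Iarc c = ∅)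

/-- A strong critical portrait. -/
def IsStrong (K : Portrait) : Prop := IsPortrait K ∧ ¬ IsWeak K

/-- Distance between (critical) portraits, metrizing convergence of the
unordered pairs of chords. -/
def portraitDist : Portrait → Portrait → ℝ :=
  Sym2.lift₂ ⟨fun a b c d =>
      min (max (chordDist a c) (chordDist b d)) (max (chordDist a d) (chordDist b c)), by
    intro a₁ a₂ b₁ b₂
    constructor
    · dsimp only
      rw [min_comm, max_comm (chordDist a₁ b₂), max_comm (chordDist a₁ b₁)]
    · dsimp only
      rw [min_comm]⟩

/-- Convergence `K_i → K` in `CrP`. -/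
def PortraitTendsto (f : ℕ → Portrait) (K : Portrait) : Prop :=
  Tendsto (fun n => portraitDist (f n) K) atTop (nhds 0)

/-- A critical portrait is compatible with a lamination if none of its chords
crosses a leaf. -/
def Compat (K : Portrait) (Λ : Lamination) : Prop :=
  ∀ c ∈ K, ∀ ℓ ∈ Λ.leaves, ¬ Cross c ℓ

/-- `C(Λ)`: the set of critical portraits compatible with `Λ`. -/
def CC (Λ : Lamination) : Set Portrait := {K | K ∈ CrP ∧ Compat K Λ}

/-- Friendship of critical portraits: both compatible with a common nonempty
limit lamination. -/
def Friends (K₁ K₂ : Portrait) : Prop :=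
  ∃ Λ : Lamination, IsLimitLam Λ ∧ Λ.NonemptyLam ∧ K₁ ∈ CC Λ ∧ K₂ ∈ CC Λ

/-- A prime critical portrait: some friend of it has a weak friend. -/
def IsPrime (K : Portrait) : Prop :=
  ∃ K' K'' : Portrait, Friends K K' ∧ Friends K' K'' ∧ IsWeak K''

/-- A regular chief: a chief all of whose critical portraits have only strong
friends. -/
def RegularChief (Λ : Lamination) : Prop :=
  IsChief Λ ∧ ∀ K ∈ CC Λ, ∀ K' : Portrait, Friends K K' → IsStrong K'

/-- A regular lamination: one having a regular chief. -/
def RegularLam (Λ : Lamination) : Prop :=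
  ∃ Λc : Lamination, IsChiefOf 3 Λc Λ ∧ RegularChief Λc

/-- A regular critical portrait: one compatible with a regular chief. -/
def RegularPortrait (K : Portrait) : Prop :=
  ∃ Λ : Lamination, RegularChief Λ ∧ K ∈ CC Λ

/-- Rotation of a circle point by angle `2πt`. -/
def rotPt (t : ℝ) (a : SPt) : SPt :=
  ⟨Complex.exp ((t * (2 * Real.pi) : ℝ) * Complex.I) * (a : ℂ), by
    rw [norm_mul, a.2, mul_one, Complex.norm_exp_ofReal_mul_I]⟩

/-- Circular betweenness: `b` lies on the (closed) counterclockwise arc from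
`a` to `c` (and `a`, `b`, `c` occur in this counterclockwise order). -/
def CBtw (a b c : SPt) : Prop :=
  ∃ s t : ℝ, 0 ≤ s ∧ s ≤ t ∧ t < 1 ∧ b = rotPt s a ∧ c = rotPt t a

/-- An invariant gap: a gap `G` of some sibling `σ_3`-invariant lamination
with `σ_3(G) = G`. -/
def IsInvGap (G : Set ℂ) : Prop :=
  ∃ Λ : Lamination, Λ.Invariant 3 ∧ IsGap Λ G ∧ gapImage 3 G = G

/-- An infinite gap (meets the circle in infinitely many points). -/
def InfiniteGapSet (G : Set ℂ) : Prop := (G ∩ circleSet).Infinite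

/-- Two circle points lie in the closure of a common complementary arc of
`G ∩ S` (or coincide): the fibers of the edge-collapsing map of `∂G`. -/
def complArcFiber (G : Set ℂ) (z w : SPt) : Prop :=
  z = w ∨ ∃ x : SPt, (x : ℂ) ∉ G ∧
    z ∈ closure (connectedComponentIn {y : SPt | (y : ℂ) ∉ G} x) ∧
    w ∈ closure (connectedComponentIn {y : SPt | (y : ℂ) ∉ G} x)

/-- A quadratic invariant gap: an infinite invariant gap of degree 2, i.e.
after collapsing the complementary arcs (edges) of its boundary, `σ_3` induces
a two-to-one covering map of the circle. -/
def QuadGap (G : Set ℂ) : Prop :=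
  IsInvGap G ∧ InfiniteGapSet G ∧
    ∃ φ : SPt → SPt, Continuous φ ∧ Function.Surjective φ ∧
      (∀ z w : SPt, φ z = φ w ↔ complArcFiber G z w) ∧
      ∃ g : SPt → SPt, IsCoveringMap g ∧ (∀ w : SPt, Nat.card (g ⁻¹' {w}) = 2) ∧
        ∀ z : SPt, (z : ℂ) ∈ G → φ (sigmaS 3 z) = g (φ z)

/-- A critical portrait is compatible with a gap if none of its chords crosses
an edge of the gap. -/
def CompatGap (K : Portrait) (G : Set ℂ) : Prop :=
  ∀ c ∈ K, ∀ ℓ : Chord, IsEdge G ℓ → ¬ Cross c ℓ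

/-- A set of portraits closed in `CrP`. -/
def ClosedPortraitSet (A : Set Portrait) : Prop :=
  ∀ f : ℕ → Portrait, (∀ n, f n ∈ A) → ∀ K ∈ CrP, PortraitTendsto f K → K ∈ A

/-- A finite rotational lap: a finite lap on which `σ_3` acts as a
combinatorial rotation of the vertices. -/
def RotationalLap (Λ : Lamination) (G : Set ℂ) : Prop :=
  IsLap Λ G ∧ (G ∩ circleSet).Finite ∧ gapImage 3 G = G ∧
    (∀ z : SPt, (z : ℂ) ∈ G → ((sigmaS 3 z : SPt) : ℂ) ∈ G) ∧
    ∀ a b c : SPt, (a : ℂ) ∈ G → (b : ℂ) ∈ G → (c : ℂ) ∈ G →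
      CBtw a b c → CBtw (sigmaS 3 a) (sigmaS 3 b) (sigmaS 3 c)


/-! ### Auxiliary machinery for stmt18 -/

section Stmt18Aux

open Complex

/-- norm squared of a point on the line through two unit vectors -/
lemma aux_unit_normsq (a b : ℂ) (ha : ‖a‖ = 1) (hb : ‖b‖ = 1) (r : ℝ) :
    ‖a + r • (b - a)‖ ^ 2 =
      1 - 2 * r * (1 - r) * (1 - (a * (starRingEnd ℂ) b).re) := by
  have h1 : a.re ^ 2 + a.im ^ 2 = 1 := by
    have : ‖a‖ ^ 2 = 1 := by rw [ha]; norm_num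
    rw [Complex.sq_norm, Complex.normSq_apply] at this
    nlinarith [this]
  have h2 : b.re ^ 2 + b.im ^ 2 = 1 := by
    have : ‖b‖ ^ 2 = 1 := by rw [hb]; norm_num
    rw [Complex.sq_norm, Complex.normSq_apply] at this
    nlinarith [this]
  have hnorm : ‖a + r • (b - a)‖ ^ 2 = Complex.normSq (a + r • (b - a)) := by
    rw [Complex.sq_norm]
  rw [hnorm, Complex.normSq_apply]
  simp only [Complex.add_re, Complex.add_im, Complex.smul_re, Complex.smul_im,
    Complex.sub_re, Complex.sub_im, Complex.mul_re, Complex.mul_im,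
    Complex.conj_re, Complex.conj_im, smul_eq_mul]
  linear_combination (1 - r)^2 * h1 + r^2 * h2

lemma aux_unit_dot_lt (a b : ℂ) (ha : ‖a‖ = 1) (hb : ‖b‖ = 1) (hne : a ≠ b) :
    (a * (starRingEnd ℂ) b).re < 1 := by
  have h1 : a.re ^ 2 + a.im ^ 2 = 1 := by
    have : ‖a‖ ^ 2 = 1 := by rw [ha]; norm_num
    rw [Complex.sq_norm, Complex.normSq_apply] at this; nlinarith [this]
  have h2 : b.re ^ 2 + b.im ^ 2 = 1 := by
    have : ‖b‖ ^ 2 = 1 := by rw [hb]; norm_num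
    rw [Complex.sq_norm, Complex.normSq_apply] at this; nlinarith [this]
  have hd : 0 < ‖a - b‖ ^ 2 := by
    have h0 : 0 < ‖a - b‖ := norm_pos_iff.mpr (sub_ne_zero.mpr hne)
    positivity
  have he : ‖a - b‖ ^ 2 = 2 - 2 * (a * (starRingEnd ℂ) b).re := by
    rw [Complex.sq_norm, Complex.normSq_apply]
    simp only [Complex.sub_re, Complex.sub_im, Complex.mul_re, Complex.mul_im,
      Complex.conj_re, Complex.conj_im]
    nlinarith [h1, h2]
  nlinarith [hd, he]

/-- a unit vector on the line through two distinct unit vectors is one of them -/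
lemma aux_unit_line_mem (a b c : ℂ) (ha : ‖a‖ = 1) (hb : ‖b‖ = 1) (hc : ‖c‖ = 1)
    (hab : a ≠ b) (r : ℝ) (hr : c = a + r • (b - a)) : c = a ∨ c = b := by
  have h := aux_unit_normsq a b ha hb r
  rw [← hr, hc] at h
  have hdot := aux_unit_dot_lt a b ha hb hab
  have hz : r * (1 - r) = 0 := by nlinarith [h, hdot]
  rcases mul_eq_zero.mp hz with h0 | h1
  · left; rw [hr, h0]; simp
  · right
    have : r = 1 := by linarith
    rw [hr, this, one_smul]; ring

lemma aux_unit_segment_mem (a b c : ℂ) (ha : ‖a‖ = 1) (hb : ‖b‖ = 1) (hc : ‖c‖ = 1)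
    (h : c ∈ segment ℝ a b) : c = a ∨ c = b := by
  by_cases hab : a = b
  · subst hab; rw [segment_same] at h; exact Or.inl h
  · rw [segment_eq_image'] at h
    rcases h with ⟨r, _, hr⟩
    exact aux_unit_line_mem a b c ha hb hc hab r hr.symm

lemma aux_seg_subset_cball (a b : ℂ) (ha : ‖a‖ ≤ 1) (hb : ‖b‖ ≤ 1) :
    segment ℝ a b ⊆ Metric.closedBall 0 1 := by
  apply (convex_closedBall (0:ℂ) 1).segment_subset
  · simpa [Metric.mem_closedBall, dist_zero_right] using ha
  · simpa [Metric.mem_closedBall, dist_zero_right] using hb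

lemma aux_isCompact_segment (a b : ℂ) : IsCompact (segment ℝ a b) := by
  rw [segment_eq_image']
  exact isCompact_Icc.image <| by
    exact continuous_const.add (continuous_id.smul continuous_const)

lemma aux_seg_norm_le (a b x : ℂ) (ha : ‖a‖ = 1) (hb : ‖b‖ = 1)
    (hx : x ∈ segment ℝ a b) : ‖x‖ ≤ 1 := by
  have := aux_seg_subset_cball a b ha.le hb.le hx
  simpa [Metric.mem_closedBall, dist_zero_right] using this

/-! chord basics -/

lemma aux_chordSet_mk (a b : SPt) : chordSet s(a, b) = segment ℝ (a : ℂ) (b : ℂ) := rfl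

lemma aux_chord_exists_rep (c : Chord) : ∃ p : SPt × SPt, c = s(p.1, p.2) := by
  induction c using Sym2.ind with
  | _ x y => exact ⟨(x, y), rfl⟩

noncomputable def epPair (c : Chord) : SPt × SPt := (aux_chord_exists_rep c).choose

lemma epPair_spec (c : Chord) : c = s((epPair c).1, (epPair c).2) :=
  (aux_chord_exists_rep c).choose_spec

lemma aux_chordSet_nonempty (c : Chord) : (chordSet c).Nonempty := by
  induction c using Sym2.ind with
  | _ x y => exact ⟨x, left_mem_segment ℝ _ _⟩

lemma aux_chordSet_compact (c : Chord) : IsCompact (chordSet c) := by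
  induction c using Sym2.ind with
  | _ x y => exact aux_isCompact_segment _ _

lemma aux_chordSet_bounded (c : Chord) : Bornology.IsBounded (chordSet c) :=
  (aux_chordSet_compact c).isBounded

lemma aux_chordSet_closed (c : Chord) : IsClosed (chordSet c) :=
  (aux_chordSet_compact c).isClosed

lemma aux_chordEdist_ne_top (c₁ c₂ : Chord) :
    EMetric.hausdorffEdist (chordSet c₁) (chordSet c₂) ≠ ⊤ :=
  Metric.hausdorffEdist_ne_top_of_nonempty_of_bounded (aux_chordSet_nonempty c₁)
    (aux_chordSet_nonempty c₂) (aux_chordSet_bounded c₁) (aux_chordSet_bounded c₂)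

lemma aux_chordDist_nonneg (c₁ c₂ : Chord) : 0 ≤ chordDist c₁ c₂ :=
  Metric.hausdorffDist_nonneg

lemma aux_chordDist_comm (c₁ c₂ : Chord) : chordDist c₁ c₂ = chordDist c₂ c₁ :=
  Metric.hausdorffDist_comm

lemma aux_chordDist_triangle (c₁ c₂ c₃ : Chord) :
    chordDist c₁ c₃ ≤ chordDist c₁ c₂ + chordDist c₂ c₃ :=
  Metric.hausdorffDist_triangle (aux_chordEdist_ne_top c₁ c₂)

lemma aux_chordDist_self (c : Chord) : chordDist c c = 0 := by
  simp [chordDist]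

/-- segments with unit endpoints determine their endpoints -/
lemma aux_seg_eq_iff (a b u v : SPt) (h : segment ℝ (a:ℂ) (b:ℂ) = segment ℝ (u:ℂ) (v:ℂ)) :
    s(a, b) = s(u, v) := by
  have hu : (u:ℂ) = a ∨ (u:ℂ) = b :=
    aux_unit_segment_mem _ _ _ a.2 b.2 u.2 (h ▸ left_mem_segment ℝ (u:ℂ) (v:ℂ))
  have hv : (v:ℂ) = a ∨ (v:ℂ) = b :=
    aux_unit_segment_mem _ _ _ a.2 b.2 v.2 (h ▸ right_mem_segment ℝ (u:ℂ) (v:ℂ))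
  have ha : (a:ℂ) = u ∨ (a:ℂ) = v :=
    aux_unit_segment_mem _ _ _ u.2 v.2 a.2 (h ▸ left_mem_segment ℝ (a:ℂ) (b:ℂ))
  have hb : (b:ℂ) = u ∨ (b:ℂ) = v :=
    aux_unit_segment_mem _ _ _ u.2 v.2 b.2 (h ▸ right_mem_segment ℝ (a:ℂ) (b:ℂ))
  have hu' : u = a ∨ u = b := hu.imp Subtype.ext Subtype.ext
  have hv' : v = a ∨ v = b := hv.imp Subtype.ext Subtype.ext
  have ha' : a = u ∨ a = v := ha.imp Subtype.ext Subtype.ext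
  have hb' : b = u ∨ b = v := hb.imp Subtype.ext Subtype.ext
  rw [Sym2.eq_iff]
  rcases hu' with rfl | rfl <;> rcases hv' with hv' | hv' <;> tauto

lemma aux_chordSet_inj {c₁ c₂ : Chord} (h : chordSet c₁ = chordSet c₂) : c₁ = c₂ := by
  induction c₁ using Sym2.ind with
  | _ a b =>
    induction c₂ using Sym2.ind with
    | _ u v => exact aux_seg_eq_iff a b u v h

lemma aux_chordDist_eq_zero {c₁ c₂ : Chord} (h : chordDist c₁ c₂ = 0) : c₁ = c₂ := by
  apply aux_chordSet_inj
  have := (IsClosed.hausdorffDist_zero_iff_eq (aux_chordSet_closed c₁)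
    (aux_chordSet_closed c₂) (aux_chordEdist_ne_top c₁ c₂)).mp h
  exact this

lemma aux_chordDist_le (a b u v : SPt) :
    chordDist s(a, b) s(u, v) ≤ max (dist (a:ℂ) (u:ℂ)) (dist (b:ℂ) (v:ℂ)) := by
  have h0 : (0:ℝ) ≤ max (dist (a:ℂ) (u:ℂ)) (dist (b:ℂ) (v:ℂ)) :=
    le_max_of_le_left dist_nonneg
  apply Metric.hausdorffDist_le_of_mem_dist h0
  · intro x hx
    rw [aux_chordSet_mk, segment_eq_image'] at hx
    rcases hx with ⟨r, hr, hxr⟩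
    refine ⟨(u:ℂ) + r • ((v:ℂ) - u), ?_, ?_⟩
    · rw [aux_chordSet_mk, segment_eq_image']; exact ⟨r, hr, rfl⟩
    · rw [← hxr, dist_eq_norm]
      have hid : (a:ℂ) + r • ((b:ℂ) - a) - ((u:ℂ) + r • ((v:ℂ) - u))
          = (1 - r) • ((a:ℂ) - u) + r • ((b:ℂ) - v) := by
        simp [smul_sub, sub_smul]; ring
      rw [hid]
      calc ‖(1 - r) • ((a:ℂ) - u) + r • ((b:ℂ) - v)‖
          ≤ ‖(1 - r) • ((a:ℂ) - u)‖ + ‖r • ((b:ℂ) - v)‖ := norm_add_le _ _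
        _ ≤ (1 - r) * dist (a:ℂ) u + r * dist (b:ℂ) v := by
            rw [norm_smul, norm_smul, Real.norm_eq_abs, Real.norm_eq_abs,
              _root_.abs_of_nonneg (by linarith [hr.1, hr.2] : (0:ℝ) ≤ 1 - r),
              _root_.abs_of_nonneg hr.1, dist_eq_norm, dist_eq_norm]
        _ ≤ (1 - r) * max (dist (a:ℂ) u) (dist (b:ℂ) v)
              + r * max (dist (a:ℂ) u) (dist (b:ℂ) v) := by
            have h1 : dist (a:ℂ) u ≤ max (dist (a:ℂ) u) (dist (b:ℂ) v) := le_max_left _ _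
            have h2 : dist (b:ℂ) v ≤ max (dist (a:ℂ) u) (dist (b:ℂ) v) := le_max_right _ _
            have := hr.1; have := hr.2
            nlinarith
        _ = max (dist (a:ℂ) u) (dist (b:ℂ) v) := by ring
  · intro x hx
    rw [aux_chordSet_mk, segment_eq_image'] at hx
    rcases hx with ⟨r, hr, hxr⟩
    refine ⟨(a:ℂ) + r • ((b:ℂ) - a), ?_, ?_⟩
    · rw [aux_chordSet_mk, segment_eq_image']; exact ⟨r, hr, rfl⟩
    · rw [← hxr, dist_eq_norm]
      have hid : (u:ℂ) + r • ((v:ℂ) - u) - ((a:ℂ) + r • ((b:ℂ) - a))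
          = (1 - r) • ((u:ℂ) - a) + r • ((v:ℂ) - b) := by
        simp [smul_sub, sub_smul]; ring
      rw [hid]
      calc ‖(1 - r) • ((u:ℂ) - a) + r • ((v:ℂ) - b)‖
          ≤ ‖(1 - r) • ((u:ℂ) - a)‖ + ‖r • ((v:ℂ) - b)‖ := norm_add_le _ _
        _ ≤ (1 - r) * dist (a:ℂ) u + r * dist (b:ℂ) v := by
            rw [norm_smul, norm_smul, Real.norm_eq_abs, Real.norm_eq_abs,
              _root_.abs_of_nonneg (by linarith [hr.1, hr.2] : (0:ℝ) ≤ 1 - r),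
              _root_.abs_of_nonneg hr.1, dist_comm ((a:SPt):ℂ) (u:ℂ), dist_comm ((b:SPt):ℂ) (v:ℂ),
              dist_eq_norm, dist_eq_norm]
        _ ≤ (1 - r) * max (dist (a:ℂ) u) (dist (b:ℂ) v)
              + r * max (dist (a:ℂ) u) (dist (b:ℂ) v) := by
            have h1 : dist (a:ℂ) u ≤ max (dist (a:ℂ) u) (dist (b:ℂ) v) := le_max_left _ _
            have h2 : dist (b:ℂ) v ≤ max (dist (a:ℂ) u) (dist (b:ℂ) v) := le_max_right _ _
            have := hr.1; have := hr.2
            nlinarith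
        _ = max (dist (a:ℂ) u) (dist (b:ℂ) v) := by ring

end Stmt18Aux


section Stmt18Aux2

open Complex Filter

/-! ### cube roots of unity -/

noncomputable def om3 : ℂ := -1/2 + (Real.sqrt 3 / 2) * Complex.I

lemma om3_re : om3.re = -1/2 := by simp [om3]
lemma om3_im : om3.im = Real.sqrt 3 / 2 := by simp [om3]

lemma sqrt3_sq : Real.sqrt 3 ^ 2 = 3 := Real.sq_sqrt (by norm_num)
lemma sqrt3_pos : 0 < Real.sqrt 3 := Real.sqrt_pos.mpr (by norm_num)

lemma om3_sum : om3 ^ 2 + om3 + 1 = 0 := by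
  apply Complex.ext <;>
    simp only [pow_two, Complex.mul_re, Complex.mul_im, Complex.add_re, Complex.add_im,
      om3_re, om3_im, Complex.one_re, Complex.one_im, Complex.zero_re, Complex.zero_im] <;>
    nlinarith [sqrt3_sq]

lemma om3_ne_one : om3 ≠ 1 := by
  intro h
  have := congrArg Complex.im h
  rw [om3_im, Complex.one_im] at this
  nlinarith [sqrt3_pos]

lemma om3_sq_ne_one : om3 ^ 2 ≠ 1 := by
  intro h
  have := congrArg Complex.im h
  simp only [pow_two, Complex.mul_im, om3_re, om3_im, Complex.one_im] at this
  nlinarith [sqrt3_pos]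

lemma aux_cube_cases {x y : ℂ} (hx : x ≠ 0) (h : x ^ 3 = y ^ 3) :
    y = x ∨ y = om3 * x ∨ y = om3 ^ 2 * x := by
  have key : (y - x) * ((y - om3 * x) * (y - om3 ^ 2 * x)) = y ^ 3 - x ^ 3 := by
    linear_combination (-(x * y ^ 2) + om3 * x ^ 2 * y - (om3 - 1) * x ^ 3) * om3_sum
  have h0 : (y - x) * ((y - om3 * x) * (y - om3 ^ 2 * x)) = 0 := by rw [key, h]; ring
  rcases mul_eq_zero.mp h0 with h1 | h2
  · exact Or.inl (sub_eq_zero.mp h1)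
  · rcases mul_eq_zero.mp h2 with h3 | h4
    · exact Or.inr (Or.inl (sub_eq_zero.mp h3))
    · exact Or.inr (Or.inr (sub_eq_zero.mp h4))

lemma aux_om_mul_ne {x : ℂ} (hx : x ≠ 0) (w : ℂ) (hw : w = om3 ∨ w = om3 ^ 2) :
    w * x ≠ x := by
  intro h
  have hz : (w - 1) * x = 0 := by linear_combination h
  rcases mul_eq_zero.mp hz with h1 | h2
  · rcases hw with rfl | rfl
    · exact om3_ne_one (sub_eq_zero.mp h1)
    · exact om3_sq_ne_one (sub_eq_zero.mp h1)
  · exact hx h2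

/-! ### 2x2 determinant / transversal intersection stability -/

def det2 (z w : ℂ) : ℝ := z.re * w.im - z.im * w.re

lemma det2_tendsto {l : Filter ℕ} {f g : ℕ → ℂ} {F G : ℂ}
    (hf : Tendsto f l (nhds F)) (hg : Tendsto g l (nhds G)) :
    Tendsto (fun n => det2 (f n) (g n)) l (nhds (det2 F G)) := by
  have hfre : Tendsto (fun n => (f n).re) l (nhds F.re) :=
    (Complex.continuous_re.tendsto F).comp hf
  have hfim : Tendsto (fun n => (f n).im) l (nhds F.im) :=
    (Complex.continuous_im.tendsto F).comp hf
  have hgre : Tendsto (fun n => (g n).re) l (nhds G.re) :=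
    (Complex.continuous_re.tendsto G).comp hg
  have hgim : Tendsto (fun n => (g n).im) l (nhds G.im) :=
    (Complex.continuous_im.tendsto G).comp hg
  exact (hfre.mul hgim).sub (hfim.mul hgre)

lemma det2_dep {v w : ℂ} (hv : v ≠ 0) (h : det2 v w = 0) : ∃ t : ℝ, w = t • v := by
  refine ⟨(v.re * w.re + v.im * w.im) / (v.re ^ 2 + v.im ^ 2), ?_⟩
  have hv2 : v.re ^ 2 + v.im ^ 2 ≠ 0 := by
    have h1 : 0 < Complex.normSq v := Complex.normSq_pos.mpr hv
    rw [Complex.normSq_apply] at h1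
    nlinarith
  rw [det2] at h
  apply Complex.ext
  · simp only [Complex.smul_re, Complex.smul_im, smul_eq_mul]
    field_simp
    linear_combination (-v.im) * h
  · simp only [Complex.smul_re, Complex.smul_im, smul_eq_mul]
    field_simp
    linear_combination v.re * h

lemma aux_cramer (u v w y : ℂ) (hD : det2 v y ≠ 0) :
    u + (det2 (w - u) y / det2 v y) • v = w + (-(det2 v (w - u)) / det2 v y) • y := by
  apply Complex.ext <;>
    · simp only [det2, Complex.add_re, Complex.add_im, Complex.smul_re, Complex.smul_im,
        Complex.sub_re, Complex.sub_im, smul_eq_mul]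
      rw [det2] at hD
      have hD' : y.im * v.re - y.re * v.im ≠ 0 := by
        intro h; apply hD; linear_combination h
      field_simp
      ring

lemma aux_param_s {A B C D : ℂ} (s t : ℝ)
    (hx : A + s • (B - A) = C + t • (D - C)) :
    s * det2 (B - A) (D - C) = det2 (C - A) (D - C) := by
  have e1 := congrArg Complex.re hx
  have e2 := congrArg Complex.im hx
  simp only [Complex.add_re, Complex.add_im, Complex.smul_re, Complex.smul_im,
    Complex.sub_re, Complex.sub_im, smul_eq_mul] at e1 e2
  simp only [det2, Complex.sub_re, Complex.sub_im]
  linear_combination (D.im - C.im) * e1 - (D.re - C.re) * e2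

lemma aux_param_t {A B C D : ℂ} (s t : ℝ)
    (hx : A + s • (B - A) = C + t • (D - C)) :
    t * det2 (B - A) (D - C) = -(det2 (B - A) (C - A)) := by
  have e1 := congrArg Complex.re hx
  have e2 := congrArg Complex.im hx
  simp only [Complex.add_re, Complex.add_im, Complex.smul_re, Complex.smul_im,
    Complex.sub_re, Complex.sub_im, smul_eq_mul] at e1 e2
  simp only [det2, Complex.sub_re, Complex.sub_im]
  linear_combination (B.im - A.im) * e1 - (B.re - A.re) * e2

lemma aux_stab {l : Filter ℕ} [l.NeBot] (a b c d : ℕ → ℂ) (A B C D : ℂ)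
    (ha : Tendsto a l (nhds A)) (hb : Tendsto b l (nhds B))
    (hc : Tendsto c l (nhds C)) (hd : Tendsto d l (nhds D))
    (s t : ℝ) (hs0 : 0 < s) (hs1 : s < 1) (ht0 : 0 < t) (ht1 : t < 1)
    (hx : A + s • (B - A) = C + t • (D - C))
    (hD : det2 (B - A) (D - C) ≠ 0) {ε : ℝ} (hε : 0 < ε) :
    ∀ᶠ n in l, ∃ x : ℂ, x ∈ segment ℝ (a n) (b n) ∧ x ∈ segment ℝ (c n) (d n) ∧
      dist x (A + s • (B - A)) < ε := by
  set Dn : ℕ → ℝ := fun n => det2 (b n - a n) (d n - c n) with hDn_def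
  set sn : ℕ → ℝ := fun n => det2 (c n - a n) (d n - c n) / Dn n with hsn_def
  set tn : ℕ → ℝ := fun n => -(det2 (b n - a n) (c n - a n)) / Dn n with htn_def
  have hDtend : Tendsto Dn l (nhds (det2 (B - A) (D - C))) :=
    det2_tendsto (hb.sub ha) (hd.sub hc)
  have hstend : Tendsto sn l (nhds s) := by
    have h1 : Tendsto (fun n => det2 (c n - a n) (d n - c n)) l
        (nhds (det2 (C - A) (D - C))) := det2_tendsto (hc.sub ha) (hd.sub hc)
    have h2 := h1.div hDtend hD
    have : det2 (C - A) (D - C) / det2 (B - A) (D - C) = s := by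
      field_simp
      linarith [aux_param_s s t hx]
    rwa [this] at h2
  have httend : Tendsto tn l (nhds t) := by
    have h1 : Tendsto (fun n => -(det2 (b n - a n) (c n - a n))) l
        (nhds (-(det2 (B - A) (C - A)))) := (det2_tendsto (hb.sub ha) (hc.sub ha)).neg
    have h2 := h1.div hDtend hD
    have : -(det2 (B - A) (C - A)) / det2 (B - A) (D - C) = t := by
      field_simp
      linarith [aux_param_t s t hx]
    rwa [this] at h2
  have hDne : ∀ᶠ n in l, Dn n ≠ 0 := hDtend.eventually (eventually_ne_nhds hD)
  have hsIoo : ∀ᶠ n in l, sn n ∈ Set.Ioo (0:ℝ) 1 :=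
    hstend.eventually (isOpen_Ioo.eventually_mem ⟨hs0, hs1⟩)
  have htIoo : ∀ᶠ n in l, tn n ∈ Set.Ioo (0:ℝ) 1 :=
    httend.eventually (isOpen_Ioo.eventually_mem ⟨ht0, ht1⟩)
  have hxtend : Tendsto (fun n => a n + sn n • (b n - a n)) l
      (nhds (A + s • (B - A))) := ha.add (hstend.smul (hb.sub ha))
  have hdist : ∀ᶠ n in l, dist (a n + sn n • (b n - a n)) (A + s • (B - A)) < ε :=
    Metric.tendsto_nhds.mp hxtend ε hε
  filter_upwards [hDne, hsIoo, htIoo, hdist] with n h1 h2 h3 h4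
  refine ⟨a n + sn n • (b n - a n), ?_, ?_, h4⟩
  · rw [segment_eq_image']
    exact ⟨sn n, ⟨h2.1.le, h2.2.le⟩, rfl⟩
  · have key := aux_cramer (a n) (b n - a n) (c n) (d n - c n) h1
    have heq : a n + sn n • (b n - a n) = c n + tn n • (d n - c n) := by
      simp only [hsn_def, htn_def, hDn_def]
      exact key
    rw [heq, segment_eq_image']
    exact ⟨tn n, ⟨h3.1.le, h3.2.le⟩, rfl⟩

/-! ### SPt topology, ultrafilter limits -/

instance : CompactSpace SPt :=
  isCompact_iff_compactSpace.mp (by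
    show IsCompact {z : ℂ | ‖z‖ = 1}
    have h : {z : ℂ | ‖z‖ = 1} = Metric.sphere 0 1 := by
      ext z; simp [mem_sphere_iff_norm]
    rw [h]; exact isCompact_sphere 0 1)

lemma aux_cont_coe : Continuous ((↑) : SPt → ℂ) := continuous_subtype_val

lemma aux_cont_sigmaS (d : ℕ) : Continuous (sigmaS d) :=
  Continuous.subtype_mk (continuous_subtype_val.pow d) _

noncomputable def UF : Ultrafilter ℕ := Ultrafilter.of Filter.cofinite

lemma UF_le_cofinite : (UF : Filter ℕ) ≤ Filter.cofinite := Ultrafilter.of_le _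

lemma UF_le_atTop : (UF : Filter ℕ) ≤ (atTop : Filter ℕ) :=
  le_of_le_of_eq UF_le_cofinite Nat.cofinite_eq_atTop

noncomputable def uLim {X : Type*} [TopologicalSpace X] [CompactSpace X] (f : ℕ → X) : X :=
  (isCompact_univ.ultrafilter_le_nhds (UF.map f) (by simp)).choose

lemma uLim_spec {X : Type*} [TopologicalSpace X] [CompactSpace X] (f : ℕ → X) :
    Tendsto f UF (nhds (uLim f)) := by
  have h := (isCompact_univ.ultrafilter_le_nhds (UF.map f) (by simp)).choose_spec.2
  exact h

lemma aux_tendsto_ne {X : Type*} [TopologicalSpace X] [T2Space X] {l : Filter ℕ} [l.NeBot]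
    {f g : ℕ → X} {x y : X} (hf : Tendsto f l (nhds x)) (hg : Tendsto g l (nhds y))
    (h : x ≠ y) : ∀ᶠ n in l, f n ≠ g n := by
  rcases t2_separation h with ⟨U, V, hU, hV, hxU, hyV, hUV⟩
  filter_upwards [hf.eventually (hU.eventually_mem hxU),
    hg.eventually (hV.eventually_mem hyV)] with n h1 h2
  intro he
  exact (Set.disjoint_left.mp hUV h1) (he ▸ h2)

end Stmt18Aux2


section Stmt18Aux3

open Complex Filter

lemma aux_coe_ne {x y : SPt} (h : x ≠ y) : (x : ℂ) ≠ (y : ℂ) :=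
  fun he => h (Subtype.ext he)

lemma aux_spt_ne_zero (x : SPt) : (x : ℂ) ≠ 0 := by
  intro h
  have := x.2
  rw [h] at this
  simp at this

def spOne : SPt := ⟨1, by simp⟩

lemma aux_ev_lt_of_tendsto_zero {l : Filter ℕ} {u : ℕ → ℝ} (h : Tendsto u l (nhds 0))
    {ε : ℝ} (hε : 0 < ε) : ∀ᶠ n in l, u n < ε :=
  h.eventually (gt_mem_nhds hε)

/-- endpoint convergence gives chord-distance convergence -/
lemma aux_tend_chordDist {l : Filter ℕ} {α β : ℕ → SPt} {A B : SPt}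
    (hα : Tendsto α l (nhds A)) (hβ : Tendsto β l (nhds B)) :
    Tendsto (fun n => chordDist s(α n, β n) s(A, B)) l (nhds 0) := by
  have h1 : Tendsto (fun n => dist ((α n : SPt) : ℂ) ((A : SPt) : ℂ)) l (nhds 0) := by
    have := ((aux_cont_coe.tendsto A).comp hα).dist
      (tendsto_const_nhds : Tendsto (fun _ : ℕ => (A : ℂ)) l (nhds (A : ℂ)))
    simpa using this
  have h2 : Tendsto (fun n => dist ((β n : SPt) : ℂ) ((B : SPt) : ℂ)) l (nhds 0) := by
    have := ((aux_cont_coe.tendsto B).comp hβ).dist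
      (tendsto_const_nhds : Tendsto (fun _ : ℕ => (B : ℂ)) l (nhds (B : ℂ)))
    simpa using this
  have hmax : Tendsto (fun n => max (dist ((α n : SPt) : ℂ) (A : ℂ))
      (dist ((β n : SPt) : ℂ) (B : ℂ))) l (nhds 0) := by
    have := h1.max h2
    simpa using this
  apply tendsto_of_tendsto_of_tendsto_of_le_of_le' tendsto_const_nhds hmax
  · exact Eventually.of_forall fun n => aux_chordDist_nonneg _ _
  · exact Eventually.of_forall fun n => aux_chordDist_le _ _ _ _

/-- a chord-distance limit is unique and given by endpoint limits -/
lemma aux_chord_limit_unique {l : Filter ℕ} [l.NeBot] {f : ℕ → Chord} {c : Chord}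
    {α β : ℕ → SPt} {A B : SPt}
    (hconv : Tendsto (fun n => chordDist (f n) c) l (nhds 0))
    (hfe : ∀ᶠ n in l, f n = s(α n, β n))
    (hα : Tendsto α l (nhds A)) (hβ : Tendsto β l (nhds B)) : c = s(A, B) := by
  have key : ∀ ε > (0:ℝ), chordDist c s(A, B) < ε := by
    intro ε hε
    have h1 := aux_ev_lt_of_tendsto_zero hconv (by linarith : (0:ℝ) < ε/2)
    have h2 := aux_ev_lt_of_tendsto_zero (aux_tend_chordDist hα hβ) (by linarith : (0:ℝ) < ε/2)
    obtain ⟨n, hn1, hn2, hn3⟩ := (h1.and (h2.and hfe)).exists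
    calc chordDist c s(A, B) ≤ chordDist c (f n) + chordDist (f n) s(A, B) :=
          aux_chordDist_triangle _ _ _
      _ < ε := by
          rw [aux_chordDist_comm c (f n)]
          rw [hn3] at hn1 ⊢
          linarith [hn2]
  have h0 : chordDist c s(A, B) = 0 := by
    by_contra hne
    have hpos : 0 < chordDist c s(A, B) :=
      lt_of_le_of_ne (aux_chordDist_nonneg _ _) (Ne.symm hne)
    exact absurd (key _ hpos) (lt_irrefl _)
  exact aux_chordDist_eq_zero h0

/-! ### the limit leaf set -/

def LSet (N : ℕ → Lamination) : Set Chord :=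
  {c | ∀ ε > (0:ℝ), {n | ∃ a ∈ (N n).leaves, chordDist a c < ε} ∈ UF}

lemma LSet_diag (N : ℕ → Lamination) (z : SPt) : Sym2.diag z ∈ LSet N := by
  intro ε hε
  apply Filter.mem_of_superset Filter.univ_mem
  intro n _
  exact ⟨Sym2.diag z, (N n).diag_mem z, by rw [aux_chordDist_self]; exact hε⟩

lemma LSet_intro (N : ℕ → Lamination) {f : ℕ → Chord} {α β : ℕ → SPt} {A B : SPt}
    (hf : ∀ᶠ n in (UF : Filter ℕ), f n ∈ (N n).leaves)
    (hfe : ∀ᶠ n in (UF : Filter ℕ), f n = s(α n, β n))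
    (hα : Tendsto α UF (nhds A)) (hβ : Tendsto β UF (nhds B)) : s(A, B) ∈ LSet N := by
  intro ε hε
  have h1 := aux_ev_lt_of_tendsto_zero (aux_tend_chordDist hα hβ) hε
  have : ∀ᶠ n in (UF : Filter ℕ), ∃ a ∈ (N n).leaves, chordDist a s(A, B) < ε := by
    filter_upwards [hf, hfe, h1] with n h2 h3 h4
    exact ⟨f n, h2, by rw [h3]; exact h4⟩
  exact this

lemma LSet_closed (N : ℕ → Lamination) {g : ℕ → Chord} (hg : ∀ k, g k ∈ LSet N) {c : Chord}
    (hconv : ∀ ε > (0:ℝ), ∃ k, chordDist (g k) c < ε) : c ∈ LSet N := by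
  intro ε hε
  obtain ⟨k, hk⟩ := hconv (ε/2) (by linarith)
  apply Filter.mem_of_superset (hg k (ε/2) (by linarith))
  rintro n ⟨a, ha, hak⟩
  refine ⟨a, ha, ?_⟩
  calc chordDist a c ≤ chordDist a (g k) + chordDist (g k) c := aux_chordDist_triangle _ _ _
    _ < ε := by linarith

lemma LSet_elim (N : ℕ → Lamination) {c : Chord} (hc : c ∈ LSet N) :
    ∃ f : ℕ → Chord, (∀ n, f n ∈ (N n).leaves) ∧
      Tendsto (fun n => chordDist (f n) c) UF (nhds 0) := by
  have hSne : ∀ n, ∃ a ∈ (N n).leaves, chordDist a c <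
      sInf ((fun a => chordDist a c) '' (N n).leaves) + 1/(n+1) := by
    intro n
    have hne : ((fun a => chordDist a c) '' (N n).leaves).Nonempty :=
      ⟨_, ⟨Sym2.diag spOne, (N n).diag_mem spOne, rfl⟩⟩
    have hlt : sInf ((fun a => chordDist a c) '' (N n).leaves) <
        sInf ((fun a => chordDist a c) '' (N n).leaves) + 1/(n+1) := by
      have : (0:ℝ) < 1/(n+1) := by positivity
      linarith
    obtain ⟨x, hx, hxlt⟩ := exists_lt_of_csInf_lt hne hlt
    obtain ⟨a, ha, rfl⟩ := hx
    exact ⟨a, ha, hxlt⟩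
  choose f hf1 hf2 using hSne
  refine ⟨f, hf1, ?_⟩
  have hbd : ∀ n, BddBelow ((fun a => chordDist a c) '' (N n).leaves) := by
    intro n
    refine ⟨0, ?_⟩
    rintro x ⟨a, _, rfl⟩
    exact aux_chordDist_nonneg a c
  have hInf0 : ∀ n, 0 ≤ sInf ((fun a => chordDist a c) '' (N n).leaves) := by
    intro n
    refine le_csInf ⟨chordDist (Sym2.diag spOne) c,
      ⟨Sym2.diag spOne, (N n).diag_mem spOne, rfl⟩⟩ ?_
    rintro x ⟨a, _, rfl⟩
    exact aux_chordDist_nonneg a c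
  have hInf : Tendsto (fun n => sInf ((fun a => chordDist a c) '' (N n).leaves)) UF (nhds 0) := by
    rw [Metric.tendsto_nhds]
    intro ε hε
    apply Filter.mem_of_superset (hc ε hε)
    rintro n ⟨a, ha, hak⟩
    have h1 : sInf ((fun a => chordDist a c) '' (N n).leaves) < ε :=
      csInf_lt_of_lt (hbd n) ⟨a, ha, rfl⟩ hak
    simp only [Set.mem_setOf_eq]
    rw [Real.dist_eq, sub_zero, _root_.abs_of_nonneg (hInf0 n)]
    exact h1
  have hone : Tendsto (fun n : ℕ => 1/((n:ℝ)+1)) UF (nhds 0) :=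
    tendsto_one_div_add_atTop_nhds_zero_nat.mono_left UF_le_atTop
  have hsum : Tendsto (fun n => sInf ((fun a => chordDist a c) '' (N n).leaves) + 1/((n:ℝ)+1))
      UF (nhds 0) := by
    have := hInf.add hone
    simpa using this
  apply tendsto_of_tendsto_of_tendsto_of_le_of_le' tendsto_const_nhds hsum
  · exact Eventually.of_forall fun n => aux_chordDist_nonneg _ _
  · exact Eventually.of_forall fun n => (hf2 n).le

lemma LSet_elim' (N : ℕ → Lamination) {c : Chord} (hc : c ∈ LSet N) :
    ∃ (f : ℕ → Chord) (α β : ℕ → SPt) (A B : SPt), (∀ n, f n ∈ (N n).leaves) ∧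
      (∀ n, f n = s(α n, β n)) ∧ Tendsto α UF (nhds A) ∧ Tendsto β UF (nhds B) ∧
      c = s(A, B) := by
  obtain ⟨f, hf1, hf2⟩ := LSet_elim N hc
  set α : ℕ → SPt := fun n => (epPair (f n)).1 with hα_def
  set β : ℕ → SPt := fun n => (epPair (f n)).2 with hβ_def
  refine ⟨f, α, β, uLim α, uLim β, hf1, fun n => epPair_spec (f n), uLim_spec α, uLim_spec β, ?_⟩
  exact aux_chord_limit_unique hf2 (Eventually.of_forall fun n => epPair_spec (f n))
    (uLim_spec α) (uLim_spec β)

end Stmt18Aux3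


section Stmt18Aux4

open Complex Filter

lemma aux_seg_param {A B : SPt} {x : ℂ} (hx : x ∈ segment ℝ (A:ℂ) (B:ℂ)) (hxn : ‖x‖ < 1) :
    ∃ s : ℝ, 0 < s ∧ s < 1 ∧ (A:ℂ) + s • ((B:ℂ) - (A:ℂ)) = x := by
  rw [segment_eq_image'] at hx
  obtain ⟨s, hsIcc, hsx0⟩ := hx
  have hsx : (A:ℂ) + s • ((B:ℂ) - (A:ℂ)) = x := hsx0
  refine ⟨s, ?_, ?_, hsx⟩
  · rcases lt_or_eq_of_le hsIcc.1 with h | h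
    · exact h
    · exfalso
      rw [← h, zero_smul, add_zero] at hsx
      rw [← hsx, A.2] at hxn
      linarith
  · rcases lt_or_eq_of_le hsIcc.2 with h | h
    · exact h
    · exfalso
      rw [h, one_smul] at hsx
      have hB : (B:ℂ) = x := by rw [← hsx]; ring
      rw [← hB, B.2] at hxn
      linarith

lemma aux_not_collinear {A B C D : SPt} (hne : s(A, B) ≠ s(C, D)) (hAB : A ≠ B) (hCD : C ≠ D)
    {x : ℂ} {s t : ℝ}
    (hxs : (A:ℂ) + s • ((B:ℂ) - (A:ℂ)) = x) (hxt : (C:ℂ) + t • ((D:ℂ) - (C:ℂ)) = x) :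
    det2 ((B:ℂ) - (A:ℂ)) ((D:ℂ) - (C:ℂ)) ≠ 0 := by
  intro hD0
  have hv : (B:ℂ) - (A:ℂ) ≠ 0 := sub_ne_zero.mpr (aux_coe_ne hAB.symm)
  obtain ⟨lam, hlam⟩ := det2_dep hv hD0
  have hlam0 : lam ≠ 0 := by
    intro h0; rw [h0, zero_smul] at hlam
    exact (sub_ne_zero.mpr (aux_coe_ne hCD.symm)) hlam
  have hC : (C:ℂ) = (A:ℂ) + (s - t*lam) • ((B:ℂ) - (A:ℂ)) := by
    have h1 : (C:ℂ) = x - t • ((D:ℂ) - (C:ℂ)) := by rw [← hxt]; ring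
    rw [h1, ← hxs, hlam, smul_smul, sub_smul]
    ring
  have hD : (D:ℂ) = (A:ℂ) + (s - t*lam + lam) • ((B:ℂ) - (A:ℂ)) := by
    have h1 : (D:ℂ) = (C:ℂ) + ((D:ℂ) - (C:ℂ)) := by ring
    rw [h1, hlam, hC, add_smul]
    ring
  have hCmem := aux_unit_line_mem (A:ℂ) (B:ℂ) (C:ℂ) A.2 B.2 C.2 (aux_coe_ne hAB) _ hC
  have hDmem := aux_unit_line_mem (A:ℂ) (B:ℂ) (D:ℂ) A.2 B.2 D.2 (aux_coe_ne hAB) _ hD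
  have hCD' : (C:ℂ) ≠ (D:ℂ) := aux_coe_ne hCD
  rcases hCmem with hC' | hC' <;> rcases hDmem with hD' | hD'
  · exact hCD' (hC'.trans hD'.symm)
  · apply hne
    rw [Sym2.eq_iff]
    exact Or.inl ⟨(Subtype.ext hC').symm, (Subtype.ext hD').symm⟩
  · apply hne
    rw [Sym2.eq_iff]
    exact Or.inr ⟨(Subtype.ext hD').symm, (Subtype.ext hC').symm⟩
  · exact hCD' (hC'.trans hD'.symm)

lemma aux_cross_limit {f g : ℕ → Chord} {α β γ δ : ℕ → SPt} {A B C D : SPt}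
    (hfe : ∀ᶠ n in (UF : Filter ℕ), f n = s(α n, β n))
    (hge : ∀ᶠ n in (UF : Filter ℕ), g n = s(γ n, δ n))
    (hα : Tendsto α UF (nhds A)) (hβ : Tendsto β UF (nhds B))
    (hγ : Tendsto γ UF (nhds C)) (hδ : Tendsto δ UF (nhds D))
    (hcross : Cross s(A, B) s(C, D)) : ∀ᶠ n in (UF : Filter ℕ), Cross (f n) (g n) := by
  obtain ⟨hne, x, hx⟩ := hcross
  obtain ⟨⟨hx1, hx2⟩, hx3⟩ := hx
  rw [aux_chordSet_mk] at hx1 hx2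
  have hxball : ‖x‖ < 1 := by
    simpa [openDisk, Metric.mem_ball, dist_zero_right] using hx3
  have hAB : A ≠ B := by
    rintro rfl
    rw [segment_same] at hx1
    rw [Set.mem_singleton_iff] at hx1
    rw [hx1, A.2] at hxball; linarith
  have hCD : C ≠ D := by
    rintro rfl
    rw [segment_same] at hx2
    rw [Set.mem_singleton_iff] at hx2
    rw [hx2, C.2] at hxball; linarith
  obtain ⟨s, hs0, hs1, hsx⟩ := aux_seg_param hx1 hxball
  obtain ⟨t, ht0, ht1, htx⟩ := aux_seg_param hx2 hxball
  have hDet := aux_not_collinear hne hAB hCD hsx htx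
  have hxeq : (A:ℂ) + s • ((B:ℂ) - (A:ℂ)) = (C:ℂ) + t • ((D:ℂ) - (C:ℂ)) := by
    rw [hsx, htx]
  have hf_conv : Tendsto (fun n => chordDist (f n) s(A, B)) UF (nhds 0) := by
    apply (aux_tend_chordDist hα hβ).congr'
    filter_upwards [hfe] with n h
    rw [h]
  have hg_conv : Tendsto (fun n => chordDist (g n) s(C, D)) UF (nhds 0) := by
    apply (aux_tend_chordDist hγ hδ).congr'
    filter_upwards [hge] with n h
    rw [h]
  have hfg_ne : ∀ᶠ n in (UF : Filter ℕ), f n ≠ g n := by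
    rcases UF.mem_or_compl_mem {n | f n = g n} with hmem | hmem
    · exfalso
      apply hne
      apply aux_chordDist_eq_zero
      have key : ∀ ε > (0:ℝ), chordDist s(A, B) s(C, D) < ε := by
        intro ε hε
        have e1 := aux_ev_lt_of_tendsto_zero hf_conv (half_pos hε)
        have e2 := aux_ev_lt_of_tendsto_zero hg_conv (half_pos hε)
        have e3 : ∀ᶠ n in (UF : Filter ℕ), f n = g n := hmem
        obtain ⟨n, h1, h2, h3⟩ := (e1.and (e2.and e3)).exists
        calc chordDist s(A, B) s(C, D)
            ≤ chordDist s(A, B) (f n) + chordDist (f n) s(C, D) :=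
              aux_chordDist_triangle _ _ _
          _ = chordDist (f n) s(A, B) + chordDist (g n) s(C, D) := by
              rw [aux_chordDist_comm, h3]
          _ < ε := by linarith
      by_contra h'
      have hpos : 0 < chordDist s(A, B) s(C, D) :=
        lt_of_le_of_ne (aux_chordDist_nonneg _ _) (Ne.symm h')
      exact absurd (key _ hpos) (lt_irrefl _)
    · have : {n | f n ≠ g n} ∈ UF := by
        have hcompl : {n | f n = g n}ᶜ = {n | f n ≠ g n} := by
          ext n; simp
        rw [← hcompl]
        exact hmem
      exact this
  have hεpos : (0:ℝ) < 1 - ‖x‖ := by linarith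
  have hstab := aux_stab (l := (UF : Filter ℕ)) (fun n => ((α n : SPt) : ℂ))
    (fun n => ((β n : SPt) : ℂ)) (fun n => ((γ n : SPt) : ℂ)) (fun n => ((δ n : SPt) : ℂ))
    (A:ℂ) (B:ℂ) (C:ℂ) (D:ℂ)
    ((aux_cont_coe.tendsto A).comp hα) ((aux_cont_coe.tendsto B).comp hβ)
    ((aux_cont_coe.tendsto C).comp hγ) ((aux_cont_coe.tendsto D).comp hδ)
    s t hs0 hs1 ht0 ht1 hxeq hDet hεpos
  filter_upwards [hstab, hfg_ne, hfe, hge] with n hn hne' hfn hgn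
  obtain ⟨y, hy1, hy2, hy3⟩ := hn
  refine ⟨hne', y, ⟨⟨?_, ?_⟩, ?_⟩⟩
  · rw [hfn, aux_chordSet_mk]; exact hy1
  · rw [hgn, aux_chordSet_mk]; exact hy2
  · rw [hsx] at hy3
    have : ‖y‖ < 1 := by
      calc ‖y‖ = ‖x + (y - x)‖ := by ring_nf
        _ ≤ ‖x‖ + ‖y - x‖ := norm_add_le _ _
        _ = ‖x‖ + dist y x := by rw [dist_eq_norm]
        _ < 1 := by linarith
    simpa [openDisk, Metric.mem_ball, dist_zero_right] using this

lemma aux_disjoint_limit {α β γ δ : ℕ → SPt} {A B C D : SPt}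
    (hα : Tendsto α UF (nhds A)) (hβ : Tendsto β UF (nhds B))
    (hγ : Tendsto γ UF (nhds C)) (hδ : Tendsto δ UF (nhds D))
    (hAB : A ≠ B) (hCD : C ≠ D) (hAC : A ≠ C) (hAD : A ≠ D) (hBC : B ≠ C) (hBD : B ≠ D)
    (hdisj : ∀ᶠ n in (UF : Filter ℕ),
      segment ℝ ((α n : SPt) : ℂ) ((β n : SPt) : ℂ) ∩
        segment ℝ ((γ n : SPt) : ℂ) ((δ n : SPt) : ℂ) = ∅) :
    segment ℝ (A:ℂ) (B:ℂ) ∩ segment ℝ (C:ℂ) (D:ℂ) = ∅ := by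
  have hne : s(A, B) ≠ s(C, D) := by
    rw [Ne, Sym2.eq_iff]
    push_neg
    exact ⟨fun h => absurd h hAC, fun h => absurd h hAD⟩
  rw [Set.eq_empty_iff_forall_notMem]
  rintro x ⟨hx1, hx2⟩
  have hxle : ‖x‖ ≤ 1 := aux_seg_norm_le _ _ _ A.2 B.2 hx1
  rcases lt_or_eq_of_le hxle with hlt | heq
  · obtain ⟨s, hs0, hs1, hsx⟩ := aux_seg_param hx1 hlt
    obtain ⟨t, ht0, ht1, htx⟩ := aux_seg_param hx2 hlt
    have hDet := aux_not_collinear hne hAB hCD hsx htx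
    have hxeq : (A:ℂ) + s • ((B:ℂ) - (A:ℂ)) = (C:ℂ) + t • ((D:ℂ) - (C:ℂ)) := by
      rw [hsx, htx]
    have hstab := aux_stab (l := (UF : Filter ℕ)) (fun n => ((α n : SPt) : ℂ))
      (fun n => ((β n : SPt) : ℂ)) (fun n => ((γ n : SPt) : ℂ)) (fun n => ((δ n : SPt) : ℂ))
      (A:ℂ) (B:ℂ) (C:ℂ) (D:ℂ)
      ((aux_cont_coe.tendsto A).comp hα) ((aux_cont_coe.tendsto B).comp hβ)
      ((aux_cont_coe.tendsto C).comp hγ) ((aux_cont_coe.tendsto D).comp hδ)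
      s t hs0 hs1 ht0 ht1 hxeq hDet one_pos
    obtain ⟨n, hn1, hn2⟩ := (hstab.and hdisj).exists
    obtain ⟨y, hy1, hy2, _⟩ := hn1
    have hymem : y ∈ segment ℝ ((α n : SPt) : ℂ) ((β n : SPt) : ℂ) ∩
        segment ℝ ((γ n : SPt) : ℂ) ((δ n : SPt) : ℂ) := ⟨hy1, hy2⟩
    rw [hn2] at hymem
    exact Set.notMem_empty y hymem
  · have h1 := aux_unit_segment_mem _ _ _ A.2 B.2 heq hx1
    have h2 := aux_unit_segment_mem _ _ _ C.2 D.2 heq hx2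
    rcases h1 with h1 | h1 <;> rcases h2 with h2 | h2
    · exact aux_coe_ne hAC (h1 ▸ h2 ▸ rfl)
    · exact aux_coe_ne hAD (h1 ▸ h2 ▸ rfl)
    · exact aux_coe_ne hBC (h1 ▸ h2 ▸ rfl)
    · exact aux_coe_ne hBD (h1 ▸ h2 ▸ rfl)

lemma aux_ne_of_cube_seq {g h : ℕ → SPt} {x y : SPt}
    (hg : Tendsto g UF (nhds x)) (hh : Tendsto h UF (nhds y))
    (hne : ∀ᶠ n in (UF : Filter ℕ), g n ≠ h n)
    (hcube : ∀ᶠ n in (UF : Filter ℕ), ((g n : ℂ)) ^ 3 = ((h n : ℂ)) ^ 3) : x ≠ y := by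
  have hsplit : ∀ᶠ n in (UF : Filter ℕ),
      ((h n : ℂ) = om3 * (g n : ℂ) ∨ (h n : ℂ) = om3 ^ 2 * (g n : ℂ)) := by
    filter_upwards [hne, hcube] with n h1 h2
    rcases aux_cube_cases (aux_spt_ne_zero (g n)) h2 with h3 | h3 | h3
    · exact absurd (Subtype.ext h3).symm h1
    · exact Or.inl h3
    · exact Or.inr h3
  intro hxy
  subst hxy
  have hcoe_g : Tendsto (fun n => ((g n : SPt) : ℂ)) UF (nhds (x:ℂ)) :=
    (aux_cont_coe.tendsto x).comp hg
  have hcoe_h : Tendsto (fun n => ((h n : SPt) : ℂ)) UF (nhds (x:ℂ)) :=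
    (aux_cont_coe.tendsto x).comp hh
  rcases Ultrafilter.eventually_or.mp hsplit with hev | hev
  · have h1 : Tendsto (fun n => om3 * ((g n : SPt) : ℂ)) UF (nhds (om3 * (x:ℂ))) :=
      tendsto_const_nhds.mul hcoe_g
    have h2 := tendsto_nhds_unique_of_eventuallyEq hcoe_h h1 hev
    exact aux_om_mul_ne (aux_spt_ne_zero x) om3 (Or.inl rfl) h2.symm
  · have h1 : Tendsto (fun n => om3 ^ 2 * ((g n : SPt) : ℂ)) UF (nhds (om3 ^ 2 * (x:ℂ))) :=
      tendsto_const_nhds.mul hcoe_g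
    have h2 := tendsto_nhds_unique_of_eventuallyEq hcoe_h h1 hev
    exact aux_om_mul_ne (aux_spt_ne_zero x) (om3 ^ 2) (Or.inr rfl) h2.symm

end Stmt18Aux4


section Stmt18Aux5

open Complex Filter

/-- the limit lamination of a sequence of laminations, along `UF` -/
noncomputable def limLam (N : ℕ → Lamination) : Lamination where
  leaves := LSet N
  no_cross := by
    intro ℓ₁ h₁ ℓ₂ h₂ hcross
    obtain ⟨f, α, β, A, B, hf1, hf2, hf3, hf4, hf5⟩ := LSet_elim' N h₁
    obtain ⟨g, γ, δ, C, D, hg1, hg2, hg3, hg4, hg5⟩ := LSet_elim' N h₂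
    rw [hf5, hg5] at hcross
    have hev := aux_cross_limit (Eventually.of_forall hf2) (Eventually.of_forall hg2)
      hf3 hf4 hg3 hg4 hcross
    obtain ⟨n, hn⟩ := hev.exists
    exact (N n).no_cross (f n) (hf1 n) (g n) (hg1 n) hn
  diag_mem := LSet_diag N
  plus_compact := by
    have hsub : (⋃ ℓ ∈ LSet N, chordSet ℓ) ⊆ Metric.closedBall 0 1 := by
      rintro x hx
      simp only [Set.mem_iUnion] at hx
      obtain ⟨ℓ, hℓ, hxℓ⟩ := hx
      induction ℓ using Sym2.ind with
      | _ a b =>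
        rw [aux_chordSet_mk] at hxℓ
        exact aux_seg_subset_cball _ _ a.2.le b.2.le hxℓ
    apply Metric.isCompact_of_isClosed_isBounded
    · apply IsSeqClosed.isClosed
      intro xs p hxs hxp
      have hmem : ∀ k, ∃ c, c ∈ LSet N ∧ xs k ∈ chordSet c := by
        intro k
        have := hxs k
        simp only [Set.mem_iUnion] at this
        obtain ⟨c, hc, hxc⟩ := this
        exact ⟨c, hc, hxc⟩
      choose cs hcs1 hcs2 using hmem
      set a : ℕ → SPt := fun k => (epPair (cs k)).1 with ha_def
      set b : ℕ → SPt := fun k => (epPair (cs k)).2 with hb_def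
      have hrep : ∀ k, cs k = s(a k, b k) := fun k => epPair_spec (cs k)
      have hAB : s(uLim a, uLim b) ∈ LSet N := by
        apply LSet_closed N hcs1
        intro ε hε
        have h1 := aux_ev_lt_of_tendsto_zero (aux_tend_chordDist (uLim_spec a) (uLim_spec b)) hε
        obtain ⟨k, hk⟩ := h1.exists
        exact ⟨k, by rw [hrep k]; exact hk⟩
      have hp : p ∈ chordSet s(uLim a, uLim b) := by
        rw [aux_chordSet_mk]
        have hcl : IsClosed (segment ℝ ((uLim a : SPt) : ℂ) ((uLim b : SPt) : ℂ)) :=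
          (aux_isCompact_segment _ _).isClosed
        rw [hcl.mem_iff_infDist_zero ⟨_, left_mem_segment ℝ _ _⟩]
        have key : ∀ ε > (0:ℝ),
            Metric.infDist p (segment ℝ ((uLim a : SPt) : ℂ) ((uLim b : SPt) : ℂ)) < ε := by
          intro ε hε
          have h1 : ∀ᶠ k in (UF : Filter ℕ), dist (xs k) p < ε/2 :=
            (Metric.tendsto_nhds.mp (hxp.mono_left UF_le_atTop)) (ε/2) (half_pos hε)
          have h2 : ∀ᶠ k in (UF : Filter ℕ),
              chordDist (cs k) s(uLim a, uLim b) < ε/2 := by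
            apply aux_ev_lt_of_tendsto_zero _ (half_pos hε)
            apply (aux_tend_chordDist (uLim_spec a) (uLim_spec b)).congr'
            filter_upwards [] with k
            rw [hrep k]
          obtain ⟨k, hk1, hk2⟩ := (h1.and h2).exists
          have h3 : Metric.infDist (xs k) (chordSet s(uLim a, uLim b)) ≤
              chordDist (cs k) s(uLim a, uLim b) :=
            Metric.infDist_le_hausdorffDist_of_mem (hcs2 k) (aux_chordEdist_ne_top _ _)
          have h4 : Metric.infDist p (chordSet s(uLim a, uLim b)) ≤
              Metric.infDist (xs k) (chordSet s(uLim a, uLim b)) + dist p (xs k) :=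
            Metric.infDist_le_infDist_add_dist
          rw [aux_chordSet_mk] at h3 h4
          rw [dist_comm] at hk1
          calc Metric.infDist p (segment ℝ ((uLim a : SPt) : ℂ) ((uLim b : SPt) : ℂ))
              ≤ Metric.infDist (xs k) (segment ℝ ((uLim a : SPt) : ℂ) ((uLim b : SPt) : ℂ))
                + dist p (xs k) := h4
            _ < ε := by linarith
        have hnn : 0 ≤ Metric.infDist p
            (segment ℝ ((uLim a : SPt) : ℂ) ((uLim b : SPt) : ℂ)) := Metric.infDist_nonneg
        by_contra hne
        have hpos : 0 < Metric.infDist p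
            (segment ℝ ((uLim a : SPt) : ℂ) ((uLim b : SPt) : ℂ)) :=
          lt_of_le_of_ne hnn (Ne.symm hne)
        exact absurd (key _ hpos) (lt_irrefl _)
      exact Set.mem_biUnion hAB hp
    · exact Bornology.IsBounded.subset Metric.isBounded_closedBall hsub

lemma limLam_leaves (N : ℕ → Lamination) : (limLam N).leaves = LSet N := rfl

end Stmt18Aux5


section Stmt18Aux6

open Complex Filter

lemma aux_chordMap_mk (a b : SPt) : chordMap 3 s(a, b) = s(sigmaS 3 a, sigmaS 3 b) :=
  Sym2.map_pair_eq _ _ _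

lemma aux_sigma_coe (a : SPt) : ((sigmaS 3 a : SPt) : ℂ) = (a : ℂ) ^ 3 := rfl

lemma aux_sigma_tendsto {l : Filter ℕ} {α : ℕ → SPt} {A : SPt} (hα : Tendsto α l (nhds A)) :
    Tendsto (fun n => sigmaS 3 (α n)) l (nhds (sigmaS 3 A)) :=
  ((aux_cont_sigmaS 3).tendsto A).comp hα

lemma limLam_invariant (N : ℕ → Lamination) (hinv : ∀ n, (N n).Invariant 3) :
    (limLam N).Invariant 3 := by
  classical
  refine ⟨?_, ?_, ?_⟩
  · -- forward invariance
    intro ℓ hℓ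
    obtain ⟨f, α, β, A, B, hf1, hf2, hf3, hf4, hf5⟩ := LSet_elim' N hℓ
    rw [show (limLam N).leaves = LSet N from rfl] at hℓ ⊢
    rw [hf5, aux_chordMap_mk]
    apply LSet_intro N (f := fun n => chordMap 3 (f n))
    · exact Eventually.of_forall fun n => (hinv n).1 (f n) (hf1 n)
    · exact Eventually.of_forall fun n => by rw [hf2 n, aux_chordMap_mk]
    · exact aux_sigma_tendsto hf3
    · exact aux_sigma_tendsto hf4
  · -- preimages
    intro ℓ hℓ
    obtain ⟨f, α, β, A, B, hf1, hf2, hf3, hf4, hf5⟩ := LSet_elim' N hℓ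
    have hpre : ∀ n, ∃ p ∈ (N n).leaves, chordMap 3 p = f n :=
      fun n => (hinv n).2.1 (f n) (hf1 n)
    choose pn hpn1 hpn2 using hpre
    set ζ : ℕ → SPt := fun n => (epPair (pn n)).1 with hζ_def
    set η : ℕ → SPt := fun n => (epPair (pn n)).2 with hη_def
    have hpe : ∀ n, pn n = s(ζ n, η n) := fun n => epPair_spec (pn n)
    refine ⟨s(uLim ζ, uLim η), ?_, ?_⟩
    · exact LSet_intro N (Eventually.of_forall hpn1) (Eventually.of_forall hpe)
        (uLim_spec ζ) (uLim_spec η)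
    · -- chordMap of the limit is ℓ
      have hconv : Tendsto (fun n => chordDist (f n) ℓ) UF (nhds 0) := by
        apply (aux_tend_chordDist hf3 hf4).congr'
        filter_upwards [] with n
        rw [hf2 n, hf5]
      have hfe' : ∀ᶠ n in (UF : Filter ℕ), f n = s(sigmaS 3 (ζ n), sigmaS 3 (η n)) := by
        filter_upwards [] with n
        rw [← hpn2 n, hpe n, aux_chordMap_mk]
      have := aux_chord_limit_unique hconv hfe' (aux_sigma_tendsto (uLim_spec ζ))
        (aux_sigma_tendsto (uLim_spec η))
      rw [aux_chordMap_mk, ← this]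
  · -- sibling condition
    intro ℓ hℓ hnd
    obtain ⟨f, α, β, A, B, hf1, hf2, hf3, hf4, hf5⟩ := LSet_elim' N hℓ
    have hAB3 : sigmaS 3 A ≠ sigmaS 3 B := by
      intro h
      apply hnd
      rw [hf5, aux_chordMap_mk, Sym2.mk_isDiag_iff]
      exact h
    have hnd_ev : ∀ᶠ n in (UF : Filter ℕ), sigmaS 3 (α n) ≠ sigmaS 3 (β n) :=
      aux_tendsto_ne (aux_sigma_tendsto hf3) (aux_sigma_tendsto hf4) hAB3
    have hnd_ev' : ∀ᶠ n in (UF : Filter ℕ), ¬ (chordMap 3 (f n)).IsDiag := by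
      filter_upwards [hnd_ev] with n hn
      rw [hf2 n, aux_chordMap_mk, Sym2.mk_isDiag_iff]
      exact hn
    -- sibling families
    have hsib : ∀ n, ∃ S : Fin 3 → Chord, ¬ (chordMap 3 (f n)).IsDiag →
        ((∃ i, S i = f n) ∧ (∀ i, S i ∈ (N n).leaves) ∧ Function.Injective S ∧
          (∀ i j, i ≠ j → chordSet (S i) ∩ chordSet (S j) = ∅) ∧
          (∀ i, chordMap 3 (S i) = chordMap 3 (f n))) := by
      intro n
      by_cases hn : (chordMap 3 (f n)).IsDiag
      · exact ⟨fun _ => f n, fun h => absurd hn h⟩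
      · obtain ⟨S, hS1, hS2, hS3, hS4, hS5⟩ := (hinv n).2.2 (f n) (hf1 n) hn
        exact ⟨S, fun _ => ⟨hS1, hS2, hS3, hS4, hS5⟩⟩
    choose S hS using hsib
    -- oriented endpoints
    set γ : Fin 3 → ℕ → SPt := fun i n =>
      if (((epPair (S n i)).1 : SPt) : ℂ) ^ 3 = ((α n : SPt) : ℂ) ^ 3
      then (epPair (S n i)).1 else (epPair (S n i)).2 with hγ_def
    set δ : Fin 3 → ℕ → SPt := fun i n =>
      if (((epPair (S n i)).1 : SPt) : ℂ) ^ 3 = ((α n : SPt) : ℂ) ^ 3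
      then (epPair (S n i)).2 else (epPair (S n i)).1 with hδ_def
    have hrep : ∀ i n, S n i = s(γ i n, δ i n) := by
      intro i n
      by_cases hcond : (((epPair (S n i)).1 : SPt) : ℂ) ^ 3 = ((α n : SPt) : ℂ) ^ 3
      · simp only [hγ_def, hδ_def, if_pos hcond]
        exact epPair_spec (S n i)
      · simp only [hγ_def, hδ_def, if_neg hcond]
        rw [Sym2.eq_swap]
        exact epPair_spec (S n i)
    have horient : ∀ᶠ n in (UF : Filter ℕ), ∀ i,
        sigmaS 3 (γ i n) = sigmaS 3 (α n) ∧ sigmaS 3 (δ i n) = sigmaS 3 (β n) := by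
      filter_upwards [hnd_ev, hnd_ev'] with n hn hn'
      intro i
      have hmap : chordMap 3 (S n i) = chordMap 3 (f n) := ((hS n) hn').2.2.2.2 i
      rw [epPair_spec (S n i), hf2 n, aux_chordMap_mk, aux_chordMap_mk] at hmap
      rw [Sym2.eq_iff] at hmap
      by_cases hcond : (((epPair (S n i)).1 : SPt) : ℂ) ^ 3 = ((α n : SPt) : ℂ) ^ 3
      · have hcase : sigmaS 3 (epPair (S n i)).1 = sigmaS 3 (α n) ∧
            sigmaS 3 (epPair (S n i)).2 = sigmaS 3 (β n) := by
          rcases hmap with h | h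
          · exact h
          · exfalso
            exact hn ((Subtype.ext hcond).symm.trans h.1)
        simp only [hγ_def, hδ_def, if_pos hcond]
        exact hcase
      · have hcase : sigmaS 3 (epPair (S n i)).1 = sigmaS 3 (β n) ∧
            sigmaS 3 (epPair (S n i)).2 = sigmaS 3 (α n) := by
          rcases hmap with h | h
          · exfalso
            exact hcond (Subtype.ext_iff.mp h.1)
          · exact h
        simp only [hγ_def, hδ_def, if_neg hcond]
        exact ⟨hcase.2, hcase.1⟩
    -- limits
    set CC' : Fin 3 → SPt := fun i => uLim (γ i) with hCC_def
    set DD' : Fin 3 → SPt := fun i => uLim (δ i) with hDD_def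
    have hCcube : ∀ i, sigmaS 3 (CC' i) = sigmaS 3 A := by
      intro i
      refine tendsto_nhds_unique_of_eventuallyEq (aux_sigma_tendsto (uLim_spec (γ i)))
        (aux_sigma_tendsto hf3) ?_
      filter_upwards [horient] with n hn
      exact (hn i).1
    have hDcube : ∀ i, sigmaS 3 (DD' i) = sigmaS 3 B := by
      intro i
      refine tendsto_nhds_unique_of_eventuallyEq (aux_sigma_tendsto (uLim_spec (δ i)))
        (aux_sigma_tendsto hf4) ?_
      filter_upwards [horient] with n hn
      exact (hn i).2
    have hCD_ne : ∀ i j, CC' i ≠ DD' j := by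
      intro i j h
      apply hAB3
      rw [← hCcube i, ← hDcube j, h]
    have hmemL : ∀ i, s(CC' i, DD' i) ∈ LSet N := by
      intro i
      apply LSet_intro N (f := fun n => S n i)
      · filter_upwards [hnd_ev'] with n hn
        exact ((hS n) hn).2.1 i
      · exact Eventually.of_forall fun n => hrep i n
      · exact uLim_spec (γ i)
      · exact uLim_spec (δ i)
    -- distinctness of same-role endpoints
    have hdisj_ev : ∀ i j, i ≠ j → ∀ᶠ n in (UF : Filter ℕ),
        chordSet (S n i) ∩ chordSet (S n j) = ∅ := by
      intro i j hij
      filter_upwards [hnd_ev'] with n hn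
      exact ((hS n) hn).2.2.2.1 i j hij
    have hγγ_ne : ∀ i j, i ≠ j → ∀ᶠ n in (UF : Filter ℕ), γ i n ≠ γ j n := by
      intro i j hij
      filter_upwards [hdisj_ev i j hij] with n hn
      intro he
      have h1 : ((γ i n : SPt) : ℂ) ∈ chordSet (S n i) := by
        rw [hrep i n, aux_chordSet_mk]; exact left_mem_segment ℝ _ _
      have h2 : ((γ i n : SPt) : ℂ) ∈ chordSet (S n j) := by
        rw [hrep j n, aux_chordSet_mk, he]; exact left_mem_segment ℝ _ _
      have : ((γ i n : SPt) : ℂ) ∈ chordSet (S n i) ∩ chordSet (S n j) := ⟨h1, h2⟩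
      rw [hn] at this
      exact Set.notMem_empty _ this
    have hδδ_ne : ∀ i j, i ≠ j → ∀ᶠ n in (UF : Filter ℕ), δ i n ≠ δ j n := by
      intro i j hij
      filter_upwards [hdisj_ev i j hij] with n hn
      intro he
      have h1 : ((δ i n : SPt) : ℂ) ∈ chordSet (S n i) := by
        rw [hrep i n, aux_chordSet_mk]; exact right_mem_segment ℝ _ _
      have h2 : ((δ i n : SPt) : ℂ) ∈ chordSet (S n j) := by
        rw [hrep j n, aux_chordSet_mk, he]; exact right_mem_segment ℝ _ _
      have : ((δ i n : SPt) : ℂ) ∈ chordSet (S n i) ∩ chordSet (S n j) := ⟨h1, h2⟩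
      rw [hn] at this
      exact Set.notMem_empty _ this
    have hCC_ne : ∀ i j, i ≠ j → CC' i ≠ CC' j := by
      intro i j hij
      apply aux_ne_of_cube_seq (uLim_spec (γ i)) (uLim_spec (γ j)) (hγγ_ne i j hij)
      filter_upwards [horient] with n hn
      have h1 : ((γ i n : SPt) : ℂ) ^ 3 = ((α n : SPt) : ℂ) ^ 3 := Subtype.ext_iff.mp (hn i).1
      have h2 : ((γ j n : SPt) : ℂ) ^ 3 = ((α n : SPt) : ℂ) ^ 3 := Subtype.ext_iff.mp (hn j).1
      rw [h1, h2]
    have hDD_ne : ∀ i j, i ≠ j → DD' i ≠ DD' j := by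
      intro i j hij
      apply aux_ne_of_cube_seq (uLim_spec (δ i)) (uLim_spec (δ j)) (hδδ_ne i j hij)
      filter_upwards [horient] with n hn
      have h1 : ((δ i n : SPt) : ℂ) ^ 3 = ((β n : SPt) : ℂ) ^ 3 := Subtype.ext_iff.mp (hn i).2
      have h2 : ((δ j n : SPt) : ℂ) ^ 3 = ((β n : SPt) : ℂ) ^ 3 := Subtype.ext_iff.mp (hn j).2
      rw [h1, h2]
    have hCDi_ne : ∀ i, CC' i ≠ DD' i := fun i => hCD_ne i i
    -- disjointness of limit chords
    have hdisj_lim : ∀ i j, i ≠ j → chordSet s(CC' i, DD' i) ∩ chordSet s(CC' j, DD' j) = ∅ := by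
      intro i j hij
      rw [aux_chordSet_mk, aux_chordSet_mk]
      apply aux_disjoint_limit (uLim_spec (γ i)) (uLim_spec (δ i)) (uLim_spec (γ j))
        (uLim_spec (δ j)) (hCDi_ne i) (hCDi_ne j) (hCC_ne i j hij) (hCD_ne i j)
        (hCD_ne j i).symm (hDD_ne i j hij)
      filter_upwards [hdisj_ev i j hij] with n hn
      rw [hrep i n, aux_chordSet_mk, hrep j n, aux_chordSet_mk] at hn
      exact hn
    -- which sibling is ℓ
    have hIdx : ∀ n, ∃ i : Fin 3, ¬ (chordMap 3 (f n)).IsDiag → S n i = f n := by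
      intro n
      by_cases hn : (chordMap 3 (f n)).IsDiag
      · exact ⟨0, fun h => absurd hn h⟩
      · obtain ⟨i, hi⟩ := ((hS n) hn).1
        exact ⟨i, fun _ => hi⟩
    choose I hI using hIdx
    have hIU : ∃ i₀ : Fin 3, ∀ᶠ n in (UF : Filter ℕ), I n = i₀ := by
      have hfin : ∀ i : Fin 3, i = 0 ∨ i = 1 ∨ i = 2 := by decide
      have htaut : ∀ᶠ n in (UF : Filter ℕ), I n = 0 ∨ I n = 1 ∨ I n = 2 :=
        Eventually.of_forall fun n => hfin (I n)
      rcases Ultrafilter.eventually_or.mp htaut with h | h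
      · exact ⟨0, h⟩
      · rcases Ultrafilter.eventually_or.mp h with h | h
        · exact ⟨1, h⟩
        · exact ⟨2, h⟩
    obtain ⟨i₀, hi₀⟩ := hIU
    have hSl_eq : s(CC' i₀, DD' i₀) = ℓ := by
      have hγα : ∀ᶠ n in (UF : Filter ℕ), γ i₀ n = α n := by
        have hmemU : ∀ᶠ n in (UF : Filter ℕ), I n = i₀ := hi₀
        filter_upwards [hmemU, hnd_ev', hnd_ev, horient] with n hn hn' hne hor
        have hfi : S n i₀ = f n := by rw [← hn]; exact hI n hn'
        have : s(γ i₀ n, δ i₀ n) = s(α n, β n) := by rw [← hrep i₀ n, hfi, hf2 n]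
        rw [Sym2.eq_iff] at this
        rcases this with h | h
        · exact h.1
        · exfalso
          apply hne
          rw [← (hor i₀).1, h.1]
      have hδβ : ∀ᶠ n in (UF : Filter ℕ), δ i₀ n = β n := by
        have hmemU : ∀ᶠ n in (UF : Filter ℕ), I n = i₀ := hi₀
        filter_upwards [hmemU, hnd_ev', hnd_ev, horient] with n hn hn' hne hor
        have hfi : S n i₀ = f n := by rw [← hn]; exact hI n hn'
        have : s(γ i₀ n, δ i₀ n) = s(α n, β n) := by rw [← hrep i₀ n, hfi, hf2 n]
        rw [Sym2.eq_iff] at this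
        rcases this with h | h
        · exact h.2
        · exfalso
          apply hne
          rw [← (hor i₀).2, h.2]
      have h1 : CC' i₀ = A := tendsto_nhds_unique_of_eventuallyEq (uLim_spec (γ i₀)) hf3 hγα
      have h2 : DD' i₀ = B := tendsto_nhds_unique_of_eventuallyEq (uLim_spec (δ i₀)) hf4 hδβ
      rw [h1, h2, ← hf5]
    -- assemble
    refine ⟨fun i => s(CC' i, DD' i), ⟨i₀, hSl_eq⟩, hmemL, ?_, hdisj_lim, ?_⟩
    · intro i j hij
      by_contra hne'
      have hd := hdisj_lim i j hne'
      have hij' : s(CC' i, DD' i) = s(CC' j, DD' j) := hij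
      rw [hij', Set.inter_self] at hd
      exact Set.not_nonempty_empty (hd ▸ aux_chordSet_nonempty s(CC' j, DD' j))
    · intro i
      rw [hf5, aux_chordMap_mk, aux_chordMap_mk, hCcube i, hDcube i]

end Stmt18Aux6


section Stmt18Aux7

open Complex Filter

lemma aux_double (a b : SPt) (h : dist ((a : SPt) : ℂ) ((b : SPt) : ℂ) ≤ 1) :
    2 * dist ((a : SPt) : ℂ) ((b : SPt) : ℂ) ≤ dist (((a : SPt) : ℂ) ^ 3) (((b : SPt) : ℂ) ^ 3) := by
  rw [dist_eq_norm] at h ⊢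
  rw [dist_eq_norm]
  have key : ((a:ℂ)) ^ 3 - ((b:ℂ)) ^ 3 = (((a:ℂ)) - b) * ((((a:ℂ)) - b) ^ 2 + 3 * ((a:ℂ) * b)) := by
    ring
  rw [key, norm_mul]
  have h3 : ‖(3 : ℂ) * ((a:ℂ) * b)‖ = 3 := by
    rw [norm_mul, norm_mul, a.2, b.2]
    simp
  have hbound : 2 ≤ ‖(((a:ℂ)) - b) ^ 2 + 3 * ((a:ℂ) * b)‖ := by
    have h1 := norm_sub_le ((((a:ℂ)) - b) ^ 2 + 3 * ((a:ℂ) * b)) ((((a:ℂ)) - b) ^ 2)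
    have h2 : (((a:ℂ)) - b) ^ 2 + 3 * ((a:ℂ) * b) - (((a:ℂ)) - b) ^ 2 = 3 * ((a:ℂ) * b) := by
      ring
    rw [h2, h3] at h1
    have h4 : ‖(((a:ℂ)) - b) ^ 2‖ = ‖(a:ℂ) - b‖ ^ 2 := by rw [norm_pow]
    nlinarith [norm_nonneg ((a:ℂ) - (b:ℂ))]
  nlinarith [norm_nonneg ((a:ℂ) - (b:ℂ))]

lemma aux_iter_leaf (Λ : Lamination) (hinv1 : ∀ ℓ ∈ Λ.leaves, chordMap 3 ℓ ∈ Λ.leaves)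
    (a b : SPt) (h : s(a, b) ∈ Λ.leaves) :
    ∀ m : ℕ, s((sigmaS 3)^[m] a, (sigmaS 3)^[m] b) ∈ Λ.leaves := by
  intro m
  induction m with
  | zero => simpa using h
  | succ k ih =>
      have hstep := hinv1 _ ih
      rw [aux_chordMap_mk] at hstep
      rw [Function.iterate_succ_apply', Function.iterate_succ_apply']
      exact hstep

lemma aux_big_leaf (Λ : Lamination) (hinv : Λ.Invariant 3) (hne : Λ.NonemptyLam) :
    ∃ a b : SPt, s(a, b) ∈ Λ.leaves ∧ 1 < dist ((a : SPt) : ℂ) ((b : SPt) : ℂ) := by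
  by_contra hcon
  push_neg at hcon
  obtain ⟨ℓ, hℓ, hndiag⟩ := hne
  obtain ⟨p, hp⟩ := aux_chord_exists_rep ℓ
  rw [hp] at hℓ hndiag
  rw [Sym2.mk_isDiag_iff] at hndiag
  set a := p.1
  set b := p.2
  set d0 := dist ((a : SPt) : ℂ) ((b : SPt) : ℂ) with hd0_def
  have hd0 : 0 < d0 := dist_pos.mpr (aux_coe_ne hndiag)
  have hgrow : ∀ m : ℕ, 2 ^ m * d0 ≤
      dist ((((sigmaS 3)^[m] a : SPt)) : ℂ) ((((sigmaS 3)^[m] b : SPt)) : ℂ) := by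
    intro m
    induction m with
    | zero => simp [hd0_def]
    | succ k ih =>
        have hmem := aux_iter_leaf Λ hinv.1 a b hℓ k
        have hle : dist ((((sigmaS 3)^[k] a : SPt)) : ℂ) ((((sigmaS 3)^[k] b : SPt)) : ℂ) ≤ 1 :=
          hcon _ _ hmem
        have hdd := aux_double ((sigmaS 3)^[k] a) ((sigmaS 3)^[k] b) hle
        rw [Function.iterate_succ_apply', Function.iterate_succ_apply']
        have hcoe : dist (((sigmaS 3 ((sigmaS 3)^[k] a) : SPt)) : ℂ)
            (((sigmaS 3 ((sigmaS 3)^[k] b) : SPt)) : ℂ)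
            = dist (((((sigmaS 3)^[k] a : SPt)) : ℂ) ^ 3) (((((sigmaS 3)^[k] b : SPt)) : ℂ) ^ 3) :=
          rfl
        rw [hcoe]
        calc 2 ^ (k + 1) * d0 = 2 * (2 ^ k * d0) := by ring
          _ ≤ 2 * dist ((((sigmaS 3)^[k] a : SPt)) : ℂ) ((((sigmaS 3)^[k] b : SPt)) : ℂ) := by
              linarith
          _ ≤ _ := hdd
  obtain ⟨m, hm⟩ := pow_unbounded_of_one_lt (2 / d0) one_lt_two
  have h2 : 2 < 2 ^ m * d0 := by
    rw [div_lt_iff₀ hd0] at hm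
    linarith
  have hle2 : dist ((((sigmaS 3)^[m] a : SPt)) : ℂ) ((((sigmaS 3)^[m] b : SPt)) : ℂ) ≤ 2 := by
    have hd := dist_le_norm_add_norm ((((sigmaS 3)^[m] a : SPt)) : ℂ)
      ((((sigmaS 3)^[m] b : SPt)) : ℂ)
    rw [((sigmaS 3)^[m] a).2, ((sigmaS 3)^[m] b).2] at hd
    linarith
  linarith [hgrow m]

lemma limLam_nonempty (N : ℕ → Lamination) (hinv : ∀ n, (N n).Invariant 3)
    (hne : ∀ n, (N n).NonemptyLam) : (limLam N).NonemptyLam := by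
  have hbig : ∀ n, ∃ p : SPt × SPt, s(p.1, p.2) ∈ (N n).leaves ∧
      1 < dist ((p.1 : SPt) : ℂ) ((p.2 : SPt) : ℂ) := by
    intro n
    obtain ⟨a, b, h1, h2⟩ := aux_big_leaf (N n) (hinv n) (hne n)
    exact ⟨(a, b), h1, h2⟩
  choose pp hpp1 hpp2 using hbig
  set a : ℕ → SPt := fun n => (pp n).1
  set b : ℕ → SPt := fun n => (pp n).2
  have hmem : s(uLim a, uLim b) ∈ LSet N :=
    LSet_intro N (f := fun n => s(a n, b n)) (Eventually.of_forall hpp1)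
      (Eventually.of_forall fun n => rfl) (uLim_spec a) (uLim_spec b)
  have hdist : 1 ≤ dist ((uLim a : SPt) : ℂ) ((uLim b : SPt) : ℂ) := by
    have htend : Tendsto (fun n => dist ((a n : SPt) : ℂ) ((b n : SPt) : ℂ)) UF
        (nhds (dist ((uLim a : SPt) : ℂ) ((uLim b : SPt) : ℂ))) :=
      ((aux_cont_coe.tendsto _).comp (uLim_spec a)).dist
        ((aux_cont_coe.tendsto _).comp (uLim_spec b))
    exact ge_of_tendsto htend (Eventually.of_forall fun n => (hpp2 n).le)
  refine ⟨s(uLim a, uLim b), hmem, ?_⟩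
  rw [Sym2.mk_isDiag_iff]
  intro h
  rw [h] at hdist
  simp at hdist
  linarith

end Stmt18Aux7


section Stmt18Aux8

open Complex Filter

lemma aux_close1 (N : ℕ → Lamination) {ε : ℝ} (hε : 0 < ε) :
    ∀ᶠ n in (UF : Filter ℕ), ∀ a ∈ (N n).leaves, ∃ c ∈ LSet N, chordDist a c < ε := by
  classical
  rcases UF.mem_or_compl_mem
    {n | ∀ a ∈ (N n).leaves, ∃ c ∈ LSet N, chordDist a c < ε} with hmem | hmem
  · exact hmem
  · exfalso
    have hbad : ∀ᶠ n in (UF : Filter ℕ),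
        ∃ a ∈ (N n).leaves, ∀ c ∈ LSet N, ε ≤ chordDist a c := by
      have : ∀ᶠ n in (UF : Filter ℕ),
          ¬ (∀ a ∈ (N n).leaves, ∃ c ∈ LSet N, chordDist a c < ε) := hmem
      filter_upwards [this] with n hn
      push_neg at hn
      exact hn
    have hch : ∀ n, ∃ a : Chord, (¬ (∀ a' ∈ (N n).leaves, ∃ c ∈ LSet N, chordDist a' c < ε)) →
        (a ∈ (N n).leaves ∧ ∀ c ∈ LSet N, ε ≤ chordDist a c) := by
      intro n
      by_cases hn : ∀ a' ∈ (N n).leaves, ∃ c ∈ LSet N, chordDist a' c < ε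
      · exact ⟨Sym2.diag spOne, fun h => absurd hn h⟩
      · push_neg at hn
        obtain ⟨a, ha1, ha2⟩ := hn
        exact ⟨a, fun _ => ⟨ha1, ha2⟩⟩
    choose w hw using hch
    set wa : ℕ → SPt := fun n => (epPair (w n)).1
    set wb : ℕ → SPt := fun n => (epPair (w n)).2
    have hwrep : ∀ n, w n = s(wa n, wb n) := fun n => epPair_spec (w n)
    have hbad' : ∀ᶠ n in (UF : Filter ℕ),
        w n ∈ (N n).leaves ∧ ∀ c ∈ LSet N, ε ≤ chordDist (w n) c := by
      filter_upwards [hmem] with n hn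
      exact hw n hn
    have hcstar : s(uLim wa, uLim wb) ∈ LSet N :=
      LSet_intro N (hbad'.mono fun n h => h.1) (Eventually.of_forall hwrep)
        (uLim_spec wa) (uLim_spec wb)
    have hclose : ∀ᶠ n in (UF : Filter ℕ), chordDist (w n) s(uLim wa, uLim wb) < ε := by
      apply aux_ev_lt_of_tendsto_zero _ hε
      apply (aux_tend_chordDist (uLim_spec wa) (uLim_spec wb)).congr'
      filter_upwards [] with n
      rw [hwrep n]
    obtain ⟨n, hn1, hn2⟩ := (hbad'.and hclose).exists
    exact absurd hn2 (not_lt.mpr (hn1.2 _ hcstar))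

lemma aux_close2 (N : ℕ → Lamination) {ε : ℝ} (hε : 0 < ε) :
    ∀ᶠ n in (UF : Filter ℕ), ∀ c ∈ LSet N, ∃ a ∈ (N n).leaves, chordDist a c < ε := by
  classical
  rcases UF.mem_or_compl_mem
    {n | ∀ c ∈ LSet N, ∃ a ∈ (N n).leaves, chordDist a c < ε} with hmem | hmem
  · exact hmem
  · exfalso
    have hch : ∀ n, ∃ c : Chord, c ∈ LSet N ∧
        ((¬ ∀ c' ∈ LSet N, ∃ a ∈ (N n).leaves, chordDist a c' < ε) →
          ∀ a ∈ (N n).leaves, ε ≤ chordDist a c) := by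
      intro n
      by_cases hn : ∀ c' ∈ LSet N, ∃ a ∈ (N n).leaves, chordDist a c' < ε
      · exact ⟨Sym2.diag spOne, LSet_diag N spOne, fun h => absurd hn h⟩
      · push_neg at hn
        obtain ⟨c, hc1, hc2⟩ := hn
        exact ⟨c, hc1, fun _ => hc2⟩
    choose w hw1 hw2 using hch
    set wa : ℕ → SPt := fun n => (epPair (w n)).1
    set wb : ℕ → SPt := fun n => (epPair (w n)).2
    have hwrep : ∀ n, w n = s(wa n, wb n) := fun n => epPair_spec (w n)
    have htend : Tendsto (fun n => chordDist (w n) s(uLim wa, uLim wb)) UF (nhds 0) := by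
      apply (aux_tend_chordDist (uLim_spec wa) (uLim_spec wb)).congr'
      filter_upwards [] with n
      rw [hwrep n]
    have hcstar : s(uLim wa, uLim wb) ∈ LSet N := by
      apply LSet_closed N hw1
      intro ε' hε'
      exact (aux_ev_lt_of_tendsto_zero htend hε').exists
    have hE1 : {n | ∃ a ∈ (N n).leaves, chordDist a s(uLim wa, uLim wb) < ε/2} ∈ UF :=
      hcstar (ε/2) (half_pos hε)
    have hE2 : ∀ᶠ n in (UF : Filter ℕ), chordDist (w n) s(uLim wa, uLim wb) < ε/2 :=
      aux_ev_lt_of_tendsto_zero htend (half_pos hε)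
    have hE3 : ∀ᶠ n in (UF : Filter ℕ), ∀ a ∈ (N n).leaves, ε ≤ chordDist a (w n) := by
      filter_upwards [hmem] with n hn
      exact hw2 n hn
    have hE1' : ∀ᶠ n in (UF : Filter ℕ),
        ∃ a ∈ (N n).leaves, chordDist a s(uLim wa, uLim wb) < ε/2 := hE1
    obtain ⟨n, hn1, hn2, hn3⟩ := (hE1'.and (hE2.and hE3)).exists
    obtain ⟨a, ha1, ha2⟩ := hn1
    have : chordDist a (w n) < ε := by
      calc chordDist a (w n)
          ≤ chordDist a s(uLim wa, uLim wb) + chordDist s(uLim wa, uLim wb) (w n) :=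
            aux_chordDist_triangle _ _ _
        _ < ε := by
            rw [aux_chordDist_comm s(uLim wa, uLim wb) (w n)]
            linarith [hn2]
    exact absurd this (not_lt.mpr (hn3 a ha1))

end Stmt18Aux8


section Stmt18Aux9

open Complex Filter

lemma limLam_isLimit (N : ℕ → Lamination) (h : ∀ n, IsLimitLam (N n)) :
    IsLimitLam (limLam N) := by
  refine ⟨limLam_invariant N (fun n => (h n).1), ?_⟩
  have hpos : ∀ j : ℕ, (0:ℝ) < 1/((j:ℝ)+1) := by
    intro j; positivity
  have hG : ∀ j : ℕ, ∃ n : ℕ,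
      (∀ a ∈ (N n).leaves, ∃ c ∈ LSet N, chordDist a c < 1/((j:ℝ)+1)) ∧
      (∀ c ∈ LSet N, ∃ a ∈ (N n).leaves, chordDist a c < 1/((j:ℝ)+1)) := by
    intro j
    exact ((aux_close1 N (hpos j)).and (aux_close2 N (hpos j))).exists
  choose nf hnf1 hnf2 using hG
  have hC : ∀ j : ℕ, ∃ M : Lamination, (M.Invariant 3 ∧ M.Clean) ∧
      (∀ ℓ ∈ M.leaves, ∃ ℓ' ∈ (N (nf j)).leaves, chordDist ℓ ℓ' < 1/((j:ℝ)+1)) ∧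
      (∀ ℓ' ∈ (N (nf j)).leaves, ∃ ℓ ∈ M.leaves, chordDist ℓ ℓ' < 1/((j:ℝ)+1)) := by
    intro j
    obtain ⟨Λi, hΛi, hLT⟩ := (h (nf j)).2
    obtain ⟨m, hm⟩ := (hLT (1/((j:ℝ)+1)) (hpos j)).exists
    exact ⟨Λi m, hΛi m, hm.1, hm.2⟩
  choose M hM1 hM2 hM3 using hC
  refine ⟨M, hM1, ?_⟩
  intro ε hε
  obtain ⟨J, hJ⟩ := exists_nat_gt (2/ε)
  have hJbound : ∀ j : ℕ, J ≤ j → 2/((j:ℝ)+1) < ε := by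
    intro j hj
    have h1 : (J:ℝ) ≤ j := Nat.cast_le.mpr hj
    have h2 : 2/ε < (J:ℝ) := hJ
    have h3 : (0:ℝ) < (j:ℝ)+1 := by positivity
    rw [div_lt_iff₀ h3]
    rw [div_lt_iff₀ hε] at h2
    nlinarith
  rw [eventually_atTop]
  refine ⟨J, fun j hj => ⟨?_, ?_⟩⟩
  · intro ℓ hℓ
    obtain ⟨ℓ', hℓ'1, hℓ'2⟩ := hM2 j ℓ hℓ
    obtain ⟨c, hc1, hc2⟩ := hnf1 j ℓ' hℓ'1
    refine ⟨c, hc1, ?_⟩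
    calc chordDist ℓ c ≤ chordDist ℓ ℓ' + chordDist ℓ' c := aux_chordDist_triangle _ _ _
      _ < 1/((j:ℝ)+1) + 1/((j:ℝ)+1) := by linarith
      _ = 2/((j:ℝ)+1) := by ring
      _ < ε := hJbound j hj
  · intro c hc
    obtain ⟨a, ha1, ha2⟩ := hnf2 j c hc
    obtain ⟨ℓ, hℓ1, hℓ2⟩ := hM3 j a ha1
    refine ⟨ℓ, hℓ1, ?_⟩
    calc chordDist ℓ c ≤ chordDist ℓ a + chordDist a c := aux_chordDist_triangle _ _ _
      _ < 1/((j:ℝ)+1) + 1/((j:ℝ)+1) := by linarith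
      _ = 2/((j:ℝ)+1) := by ring
      _ < ε := hJbound j hj

lemma aux_compat_transfer (N : ℕ → Lamination) {c : Chord} {cn : ℕ → Chord}
    {α β : ℕ → SPt} {A B : SPt}
    (hce : ∀ᶠ n in (UF : Filter ℕ), cn n = s(α n, β n)) (hα : Tendsto α UF (nhds A))
    (hβ : Tendsto β UF (nhds B)) (hc : c = s(A, B))
    (hcompat : ∀ᶠ n in (UF : Filter ℕ), ∀ ℓ ∈ (N n).leaves, ¬ Cross (cn n) ℓ) :
    ∀ ℓ ∈ LSet N, ¬ Cross c ℓ := by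
  intro ℓ hℓ hcross
  obtain ⟨g, γ, δ, C, D, hg1, hg2, hg3, hg4, hg5⟩ := LSet_elim' N hℓ
  rw [hc, hg5] at hcross
  have hev := aux_cross_limit hce (Eventually.of_forall hg2) hα hβ hg3 hg4 hcross
  obtain ⟨n, hn1, hn2⟩ := (hev.and hcompat).exists
  exact hn2 (g n) (hg1 n) hn1

end Stmt18Aux9


section Stmt18Aux10

open Complex Filter

lemma aux_portraitDist_mk (p q k l : Chord) :
    portraitDist s(p, q) s(k, l) =
      min (max (chordDist p k) (chordDist q l)) (max (chordDist p l) (chordDist q k)) := rfl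

lemma aux_portraitDist_nonneg_mk (p q k l : Chord) : 0 ≤ portraitDist s(p, q) s(k, l) := by
  rw [aux_portraitDist_mk]
  apply le_min <;> exact le_max_of_le_left (aux_chordDist_nonneg _ _)

lemma aux_portrait_split {P : ℕ → Portrait} {p q : ℕ → Chord} {k₁ k₂ : Chord}
    (hPe : ∀ n, P n = s(p n, q n))
    (hconv : Tendsto (fun n => portraitDist (P n) s(k₁, k₂)) UF (nhds 0)) :
    ∃ p' q' : ℕ → Chord, (∀ n, P n = s(p' n, q' n)) ∧
      Tendsto (fun n => chordDist (p' n) k₁) UF (nhds 0) ∧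
      Tendsto (fun n => chordDist (q' n) k₂) UF (nhds 0) := by
  classical
  set cnd : ℕ → Prop := fun n =>
    max (chordDist (p n) k₁) (chordDist (q n) k₂) ≤
      max (chordDist (p n) k₂) (chordDist (q n) k₁) with hcnd
  set p' : ℕ → Chord := fun n => if cnd n then p n else q n with hp'
  set q' : ℕ → Chord := fun n => if cnd n then q n else p n with hq'
  have hPe' : ∀ n, P n = s(p' n, q' n) := by
    intro n
    by_cases hn : cnd n
    · simp only [hp', hq', if_pos hn]; exact hPe n
    · simp only [hp', hq', if_neg hn]; rw [Sym2.eq_swap]; exact hPe n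
  have hb1 : ∀ n, chordDist (p' n) k₁ ≤ portraitDist (P n) s(k₁, k₂) := by
    intro n
    rw [hPe n, aux_portraitDist_mk]
    by_cases hn : cnd n
    · simp only [hp', if_pos hn]
      rw [min_eq_left hn]
      exact le_max_left _ _
    · simp only [hp', if_neg hn]
      rw [min_eq_right (le_of_not_ge hn)]
      exact le_max_right _ _
  have hb2 : ∀ n, chordDist (q' n) k₂ ≤ portraitDist (P n) s(k₁, k₂) := by
    intro n
    rw [hPe n, aux_portraitDist_mk]
    by_cases hn : cnd n
    · simp only [hq', if_pos hn]
      rw [min_eq_left hn]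
      exact le_max_right _ _
    · simp only [hq', if_neg hn]
      rw [min_eq_right (le_of_not_ge hn)]
      exact le_max_left _ _
  refine ⟨p', q', hPe', ?_, ?_⟩
  · apply tendsto_of_tendsto_of_tendsto_of_le_of_le' tendsto_const_nhds hconv
    · exact Eventually.of_forall fun n => aux_chordDist_nonneg _ _
    · exact Eventually.of_forall hb1
  · apply tendsto_of_tendsto_of_tendsto_of_le_of_le' tendsto_const_nhds hconv
    · exact Eventually.of_forall fun n => aux_chordDist_nonneg _ _
    · exact Eventually.of_forall hb2

lemma aux_crit_limit {cn : ℕ → Chord} (hcrit : ∀ n, IsCritChord (cn n)) :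
    ∃ (ζ η : ℕ → SPt) (E1 E2 : SPt), (∀ n, cn n = s(ζ n, η n)) ∧
      Tendsto ζ UF (nhds E1) ∧ Tendsto η UF (nhds E2) ∧
      Tendsto (fun n => chordDist (cn n) s(E1, E2)) UF (nhds 0) ∧
      IsCritChord s(E1, E2) := by
  set ζ : ℕ → SPt := fun n => (epPair (cn n)).1 with hζ
  set η : ℕ → SPt := fun n => (epPair (cn n)).2 with hη
  have hrep : ∀ n, cn n = s(ζ n, η n) := fun n => epPair_spec (cn n)
  have hne : ∀ n, ζ n ≠ η n := by
    intro n
    have := (hcrit n).1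
    rw [hrep n, Sym2.mk_isDiag_iff] at this
    exact this
  have hcube : ∀ n, ((ζ n : SPt) : ℂ) ^ 3 = ((η n : SPt) : ℂ) ^ 3 := by
    intro n
    have := (hcrit n).2
    rw [hrep n, aux_chordMap_mk, Sym2.mk_isDiag_iff] at this
    exact Subtype.ext_iff.mp this
  have hEne : uLim ζ ≠ uLim η :=
    aux_ne_of_cube_seq (uLim_spec ζ) (uLim_spec η) (Eventually.of_forall hne)
      (Eventually.of_forall hcube)
  have hEcube : sigmaS 3 (uLim ζ) = sigmaS 3 (uLim η) := by
    refine tendsto_nhds_unique_of_eventuallyEq (aux_sigma_tendsto (uLim_spec ζ))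
      (aux_sigma_tendsto (uLim_spec η)) ?_
    filter_upwards [] with n
    exact Subtype.ext (hcube n)
  refine ⟨ζ, η, uLim ζ, uLim η, hrep, uLim_spec ζ, uLim_spec η, ?_, ?_⟩
  · apply (aux_tend_chordDist (uLim_spec ζ) (uLim_spec η)).congr'
    filter_upwards [] with n
    rw [hrep n]
  · constructor
    · rw [Sym2.mk_isDiag_iff]; exact hEne
    · rw [aux_chordMap_mk, Sym2.mk_isDiag_iff]; exact hEcube

lemma aux_main {NL : ℕ → Lamination} (hNL : ∀ n, IsLimitLam (NL n) ∧ (NL n).NonemptyLam)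
    {P Q : ℕ → Portrait} (hP : ∀ n, P n ∈ CC (NL n)) (hQ : ∀ n, Q n ∈ CC (NL n))
    {K : Portrait} (hK : K ∈ CrP)
    (hconv : Tendsto (fun n => portraitDist (P n) K) UF (nhds 0)) :
    ∃ K' : Portrait, Friends K K' ∧ K' ∈ CrP ∧
      Tendsto (fun n => portraitDist (Q n) K') UF (nhds 0) := by
  classical
  have hΛlimit : IsLimitLam (limLam NL) := limLam_isLimit NL (fun n => (hNL n).1)
  have hΛne : (limLam NL).NonemptyLam :=
    limLam_nonempty NL (fun n => (hNL n).1.1) (fun n => (hNL n).2)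
  obtain ⟨k₁, k₂, hKe, hk₁crit, hk₂crit, hkncross⟩ := hK
  have hPdec : ∀ n, ∃ pqn : Chord × Chord, P n = s(pqn.1, pqn.2) := by
    intro n
    obtain ⟨c, y, hcy, _, _, _⟩ := (hP n).1
    exact ⟨(c, y), hcy⟩
  choose pqn hpqn using hPdec
  rw [hKe] at hconv
  obtain ⟨p', q', hp'e, hp'conv, hq'conv⟩ := aux_portrait_split hpqn hconv
  -- limit identification for p', q'
  set pa : ℕ → SPt := fun n => (epPair (p' n)).1 with hpa
  set pb : ℕ → SPt := fun n => (epPair (p' n)).2 with hpb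
  set qa : ℕ → SPt := fun n => (epPair (q' n)).1 with hqa
  set qb : ℕ → SPt := fun n => (epPair (q' n)).2 with hqb
  have hk₁eq : k₁ = s(uLim pa, uLim pb) :=
    aux_chord_limit_unique hp'conv (Eventually.of_forall fun n => epPair_spec (p' n))
      (uLim_spec pa) (uLim_spec pb)
  have hk₂eq : k₂ = s(uLim qa, uLim qb) :=
    aux_chord_limit_unique hq'conv (Eventually.of_forall fun n => epPair_spec (q' n))
      (uLim_spec qa) (uLim_spec qb)
  have hp'compat : ∀ᶠ n in (UF : Filter ℕ), ∀ ℓ ∈ (NL n).leaves, ¬ Cross (p' n) ℓ := by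
    filter_upwards [] with n
    intro ℓ hℓ
    exact (hP n).2 (p' n) (by rw [hp'e n]; exact Sym2.mem_mk_left _ _) ℓ hℓ
  have hq'compat : ∀ᶠ n in (UF : Filter ℕ), ∀ ℓ ∈ (NL n).leaves, ¬ Cross (q' n) ℓ := by
    filter_upwards [] with n
    intro ℓ hℓ
    exact (hP n).2 (q' n) (by rw [hp'e n]; exact Sym2.mem_mk_right _ _) ℓ hℓ
  have hcompat_k₁ : ∀ ℓ ∈ LSet NL, ¬ Cross k₁ ℓ :=
    aux_compat_transfer NL (Eventually.of_forall fun n => epPair_spec (p' n))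
      (uLim_spec pa) (uLim_spec pb) hk₁eq hp'compat
  have hcompat_k₂ : ∀ ℓ ∈ LSet NL, ¬ Cross k₂ ℓ :=
    aux_compat_transfer NL (Eventually.of_forall fun n => epPair_spec (q' n))
      (uLim_spec qa) (uLim_spec qb) hk₂eq hq'compat
  have hKCC : K ∈ CC (limLam NL) := by
    refine ⟨⟨k₁, k₂, hKe, hk₁crit, hk₂crit, hkncross⟩, ?_⟩
    intro ch hch ℓ hℓ
    rw [hKe, Sym2.mem_iff] at hch
    rcases hch with rfl | rfl
    · exact hcompat_k₁ ℓ hℓ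
    · exact hcompat_k₂ ℓ hℓ
  -- now the Q side
  have hQdec : ∀ n, ∃ cyn : Chord × Chord, Q n = s(cyn.1, cyn.2) ∧ IsCritChord cyn.1 ∧
      IsCritChord cyn.2 ∧ ¬ Cross cyn.1 cyn.2 := by
    intro n
    obtain ⟨c, y, hcy, h1, h2, h3⟩ := (hQ n).1
    exact ⟨(c, y), hcy, h1, h2, h3⟩
  choose cyn hcyn1 hcyn2 hcyn3 hcyn4 using hQdec
  obtain ⟨ζ, η, E1, E2, hζe, hζt, hηt, hcq_conv, hk₁'crit⟩ :=
    aux_crit_limit (cn := fun n => (cyn n).1) hcyn2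
  obtain ⟨ζ', η', F1, F2, hζ'e, hζ't, hη't, hyq_conv, hk₂'crit⟩ :=
    aux_crit_limit (cn := fun n => (cyn n).2) hcyn3
  have hK'ncross : ¬ Cross s(E1, E2) s(F1, F2) := by
    intro hcross
    have hev := aux_cross_limit (Eventually.of_forall hζe) (Eventually.of_forall hζ'e)
      hζt hηt hζ't hη't hcross
    obtain ⟨n, hn⟩ := hev.exists
    exact hcyn4 n hn
  have hK'crp : s(s(E1, E2), s(F1, F2)) ∈ CrP :=
    ⟨s(E1, E2), s(F1, F2), rfl, hk₁'crit, hk₂'crit, hK'ncross⟩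
  have hcq_compat : ∀ᶠ n in (UF : Filter ℕ), ∀ ℓ ∈ (NL n).leaves, ¬ Cross ((cyn n).1) ℓ := by
    filter_upwards [] with n
    intro ℓ hℓ
    exact (hQ n).2 ((cyn n).1) (by rw [hcyn1 n]; exact Sym2.mem_mk_left _ _) ℓ hℓ
  have hyq_compat : ∀ᶠ n in (UF : Filter ℕ), ∀ ℓ ∈ (NL n).leaves, ¬ Cross ((cyn n).2) ℓ := by
    filter_upwards [] with n
    intro ℓ hℓ
    exact (hQ n).2 ((cyn n).2) (by rw [hcyn1 n]; exact Sym2.mem_mk_right _ _) ℓ hℓ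
  have hcompat_k₁' : ∀ ℓ ∈ LSet NL, ¬ Cross s(E1, E2) ℓ :=
    aux_compat_transfer NL (Eventually.of_forall hζe) hζt hηt rfl hcq_compat
  have hcompat_k₂' : ∀ ℓ ∈ LSet NL, ¬ Cross s(F1, F2) ℓ :=
    aux_compat_transfer NL (Eventually.of_forall hζ'e) hζ't hη't rfl hyq_compat
  have hK'CC : s(s(E1, E2), s(F1, F2)) ∈ CC (limLam NL) := by
    refine ⟨hK'crp, ?_⟩
    intro ch hch ℓ hℓ
    rw [Sym2.mem_iff] at hch
    rcases hch with rfl | rfl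
    · exact hcompat_k₁' ℓ hℓ
    · exact hcompat_k₂' ℓ hℓ
  refine ⟨s(s(E1, E2), s(F1, F2)), ⟨limLam NL, hΛlimit, hΛne, hKCC, hK'CC⟩, hK'crp, ?_⟩
  -- convergence of Q to K'
  have hmax : Tendsto (fun n => max (chordDist ((cyn n).1) s(E1, E2))
      (chordDist ((cyn n).2) s(F1, F2))) UF (nhds 0) := by
    have := hcq_conv.max hyq_conv
    simpa using this
  apply tendsto_of_tendsto_of_tendsto_of_le_of_le' tendsto_const_nhds hmax
  · filter_upwards [] with n
    rw [hcyn1 n]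
    exact aux_portraitDist_nonneg_mk _ _ _ _
  · filter_upwards [] with n
    rw [hcyn1 n, aux_portraitDist_mk]
    exact le_trans (min_le_left _ _) (le_refl _)

end Stmt18Aux10


section Stmt18Aux11

open Complex Filter

lemma aux_om3_sq_im : (om3 ^ 2).im = -(Real.sqrt 3 / 2) := by
  simp only [pow_two, Complex.mul_im, om3_re, om3_im]
  ring

lemma aux_one_add_ne {w : ℂ} (hwim : w.im ≠ 0) (r : ℝ) : (1 : ℂ) + (r : ℂ) * (w - 1) ≠ 0 := by
  intro h
  have him := congrArg Complex.im h
  simp only [Complex.add_im, Complex.one_im, Complex.mul_im, Complex.ofReal_re,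
    Complex.ofReal_im, Complex.sub_im, Complex.sub_re, Complex.one_re, Complex.one_im,
    Complex.zero_im] at him
  have hr : r = 0 := by
    rcases mul_eq_zero.mp (by linarith [him] : r * w.im = 0) with h' | h'
    · exact h'
    · exact absurd h' hwim
  rw [hr] at h
  simp at h

lemma aux_zero_notin_crit_seg {C D : SPt}
    (hk : (D : ℂ) = om3 * (C : ℂ) ∨ (D : ℂ) = om3 ^ 2 * (C : ℂ)) (r : ℝ) :
    (C : ℂ) + r • ((D : ℂ) - (C : ℂ)) ≠ 0 := by
  intro h
  have hwim : (if (D : ℂ) = om3 * (C : ℂ) then om3 else om3 ^ 2).im ≠ 0 := by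
    split_ifs
    · rw [om3_im]; positivity
    · rw [aux_om3_sq_im]
      have := sqrt3_pos
      intro hcon
      nlinarith
  set w : ℂ := if (D : ℂ) = om3 * (C : ℂ) then om3 else om3 ^ 2 with hw
  have hD : (D : ℂ) = w * (C : ℂ) := by
    rw [hw]
    split_ifs with hc
    · exact hc
    · rcases hk with hk | hk
      · exact absurd hk hc
      · exact hk
  have h2 : (C : ℂ) * ((1 : ℂ) + (r : ℂ) * (w - 1)) = 0 := by
    rw [Complex.real_smul, hD] at h
    linear_combination h
  rcases mul_eq_zero.mp h2 with h3 | h3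
  · exact aux_spt_ne_zero C h3
  · exact aux_one_add_ne hwim r h3

lemma aux_iarc_stable {yn : ℕ → Chord} {γ δ : ℕ → SPt} {C D : SPt}
    (hye : ∀ n, yn n = s(γ n, δ n)) (hγ : Tendsto γ UF (nhds C)) (hδ : Tendsto δ UF (nhds D))
    (hcrit : IsCritChord s(C, D))
    {z : SPt} {zn : ℕ → SPt} (hz : Tendsto zn UF (nhds z))
    (hzy : z ∈ Iarc s(C, D)) : ∀ᶠ n in (UF : Filter ℕ), zn n ∈ Iarc (yn n) := by
  obtain ⟨hz1, x, hx0, hxy⟩ := hzy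
  have hCD : C ≠ D := by
    have := hcrit.1
    rw [Sym2.mk_isDiag_iff] at this
    exact this
  have hcube : ((C : SPt) : ℂ) ^ 3 = ((D : SPt) : ℂ) ^ 3 := by
    have := hcrit.2
    rw [aux_chordMap_mk, Sym2.mk_isDiag_iff] at this
    exact Subtype.ext_iff.mp this
  have hk : (D : ℂ) = om3 * (C : ℂ) ∨ (D : ℂ) = om3 ^ 2 * (C : ℂ) := by
    rcases aux_cube_cases (aux_spt_ne_zero C) hcube with h | h | h
    · exact absurd (Subtype.ext h) hCD.symm
    · exact Or.inl h
    · exact Or.inr h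
  rw [aux_chordSet_mk] at hz1 hxy
  -- part 1 : eventual non-membership
  have hsegne : (segment ℝ ((C : SPt) : ℂ) ((D : SPt) : ℂ)).Nonempty :=
    ⟨_, left_mem_segment ℝ _ _⟩
  have hdpos : 0 < Metric.infDist ((z : SPt) : ℂ) (segment ℝ ((C : SPt) : ℂ) ((D : SPt) : ℂ)) :=
    ((aux_isCompact_segment _ _).isClosed.notMem_iff_infDist_pos hsegne).mp hz1
  set d := Metric.infDist ((z : SPt) : ℂ) (segment ℝ ((C : SPt) : ℂ) ((D : SPt) : ℂ)) with hd_def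
  have hev1 : ∀ᶠ n in (UF : Filter ℕ), ((zn n : SPt) : ℂ) ∉ chordSet (yn n) := by
    have hznd : ∀ᶠ n in (UF : Filter ℕ), dist ((zn n : SPt) : ℂ) ((z : SPt) : ℂ) < d/3 := by
      have := ((aux_cont_coe.tendsto z).comp hz).dist
        (tendsto_const_nhds : Tendsto (fun _ : ℕ => ((z : SPt) : ℂ)) UF (nhds _))
      simp only [dist_self] at this
      exact aux_ev_lt_of_tendsto_zero (by simpa using this) (by linarith)
    have hchd : ∀ᶠ n in (UF : Filter ℕ), chordDist (yn n) s(C, D) < d/3 := by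
      apply aux_ev_lt_of_tendsto_zero _ (by linarith : (0:ℝ) < d/3)
      apply (aux_tend_chordDist hγ hδ).congr'
      filter_upwards [] with n
      rw [hye n]
    filter_upwards [hznd, hchd] with n h1 h2
    intro hmem
    have h3 : Metric.infDist ((zn n : SPt) : ℂ) (chordSet s(C, D)) ≤ chordDist (yn n) s(C, D) :=
      Metric.infDist_le_hausdorffDist_of_mem hmem (aux_chordEdist_ne_top _ _)
    have h4 : Metric.infDist ((z : SPt) : ℂ) (chordSet s(C, D)) ≤
        Metric.infDist ((zn n : SPt) : ℂ) (chordSet s(C, D)) + dist ((z : SPt) : ℂ) ((zn n : SPt) : ℂ) :=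
      Metric.infDist_le_infDist_add_dist
    rw [aux_chordSet_mk] at h3 h4
    rw [dist_comm] at h1
    have : d < d := by
      calc d ≤ Metric.infDist ((zn n : SPt) : ℂ)
            (segment ℝ ((C : SPt) : ℂ) ((D : SPt) : ℂ)) + dist ((z : SPt) : ℂ) ((zn n : SPt) : ℂ) := h4
        _ < d := by linarith
    exact lt_irrefl _ this
  -- part 2 : eventual intersection
  have hx0' : x ∈ segment ℝ (0 : ℂ) ((z : SPt) : ℂ) := hx0
  rw [segment_eq_image'] at hx0'
  obtain ⟨sx, hsxIcc, hsx0⟩ := hx0'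
  have hsx : (0 : ℂ) + sx • (((z : SPt) : ℂ) - 0) = x := hsx0
  have hzero_not : ∀ r : ℝ, (C : ℂ) + r • ((D : ℂ) - (C : ℂ)) ≠ 0 :=
    aux_zero_notin_crit_seg hk
  have hx_ne0 : x ≠ 0 := by
    intro h0
    rw [segment_eq_image'] at hxy
    obtain ⟨r, _, hr⟩ := hxy
    have hr' : (C : ℂ) + r • ((D : ℂ) - (C : ℂ)) = x := hr
    exact hzero_not r (by rw [hr', h0])
  have hsx_pos : 0 < sx := by
    rcases lt_or_eq_of_le hsxIcc.1 with h | h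
    · exact h
    · exfalso; apply hx_ne0; rw [← hsx, ← h]; simp
  have hsx_lt : sx < 1 := by
    rcases lt_or_eq_of_le hsxIcc.2 with h | h
    · exact h
    · exfalso
      apply hz1
      have : x = ((z : SPt) : ℂ) := by rw [← hsx, h]; simp
      rw [← this]
      exact hxy
  have hxnorm : ‖x‖ < 1 := by
    rw [← hsx]
    simp only [sub_zero, zero_add, norm_smul, Real.norm_eq_abs, z.2,
      _root_.abs_of_nonneg hsx_pos.le, mul_one]
    exact hsx_lt
  obtain ⟨t, ht0, ht1, htx⟩ := aux_seg_param hxy hxnorm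
  have hvz : ((z : SPt) : ℂ) - 0 ≠ 0 := by
    rw [sub_zero]; exact aux_spt_ne_zero z
  have hdet : det2 (((z : SPt) : ℂ) - 0) (((D : SPt) : ℂ) - ((C : SPt) : ℂ)) ≠ 0 := by
    intro hdet0
    obtain ⟨lam, hlam⟩ := det2_dep hvz hdet0
    have hlam0 : lam ≠ 0 := by
      intro h0; rw [h0, zero_smul] at hlam
      exact (sub_ne_zero.mpr (aux_coe_ne hCD.symm)) hlam
    have hCline : (C : ℂ) = (sx - t * lam) • (((z : SPt) : ℂ) - 0) := by
      have h1 : (C : ℂ) = x - t • (((D : SPt) : ℂ) - ((C : SPt) : ℂ)) := by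
        rw [← htx]; ring
      rw [h1, ← hsx, hlam, smul_smul, sub_smul]
      ring
    apply hzero_not (-(sx - t * lam)/lam)
    rw [hlam, hCline, smul_smul, ← add_smul]
    have hco : (sx - t * lam) + (-(sx - t * lam)/lam * lam) = 0 := by
      field_simp
      ring
    rw [hco, zero_smul]
  have hxeq : (0 : ℂ) + sx • (((z : SPt) : ℂ) - 0) =
      ((C : SPt) : ℂ) + t • (((D : SPt) : ℂ) - ((C : SPt) : ℂ)) := by
    rw [hsx, htx]
  have hstab := aux_stab (l := (UF : Filter ℕ)) (fun _ => (0 : ℂ))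
    (fun n => ((zn n : SPt) : ℂ)) (fun n => ((γ n : SPt) : ℂ)) (fun n => ((δ n : SPt) : ℂ))
    (0 : ℂ) ((z : SPt) : ℂ) ((C : SPt) : ℂ) ((D : SPt) : ℂ)
    tendsto_const_nhds ((aux_cont_coe.tendsto z).comp hz)
    ((aux_cont_coe.tendsto C).comp hγ) ((aux_cont_coe.tendsto D).comp hδ)
    sx t hsx_pos hsx_lt ht0 ht1 hxeq hdet one_pos
  filter_upwards [hev1, hstab] with n h1 h2
  obtain ⟨y, hy1, hy2, _⟩ := h2
  refine ⟨h1, y, hy1, ?_⟩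
  rw [hye n, aux_chordSet_mk]
  exact hy2

lemma aux_orbit_iarc_limit {cq yq : ℕ → Chord} {k₁ k₂ : Chord}
    (hc : Tendsto (fun n => chordDist (cq n) k₁) UF (nhds 0))
    (hy : Tendsto (fun n => chordDist (yq n) k₂) UF (nhds 0))
    (hk₂crit : IsCritChord k₂)
    (hev : ∀ᶠ n in (UF : Filter ℕ), critOrbit (cq n) ∩ Iarc (yq n) = ∅) :
    critOrbit k₁ ∩ Iarc k₂ = ∅ := by
  rw [Set.eq_empty_iff_forall_notMem]
  rintro z ⟨hz1, hz2⟩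
  set ca : ℕ → SPt := fun n => (epPair (cq n)).1 with hca
  set cb : ℕ → SPt := fun n => (epPair (cq n)).2 with hcb
  set ya : ℕ → SPt := fun n => (epPair (yq n)).1 with hya
  set yb : ℕ → SPt := fun n => (epPair (yq n)).2 with hyb
  have hk₁eq : k₁ = s(uLim ca, uLim cb) :=
    aux_chord_limit_unique hc (Eventually.of_forall fun n => epPair_spec (cq n))
      (uLim_spec ca) (uLim_spec cb)
  have hk₂eq : k₂ = s(uLim ya, uLim yb) :=
    aux_chord_limit_unique hy (Eventually.of_forall fun n => epPair_spec (yq n))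
      (uLim_spec ya) (uLim_spec yb)
  obtain ⟨m, hm1, a, ha, haz⟩ := hz1
  rw [hk₁eq, Sym2.mem_iff] at ha
  obtain ⟨an, hant, hanmem⟩ : ∃ an : ℕ → SPt, Tendsto an UF (nhds a) ∧ ∀ n, an n ∈ cq n := by
    rcases ha with rfl | rfl
    · exact ⟨ca, uLim_spec ca, fun n => by
        rw [epPair_spec (cq n)]; exact Sym2.mem_mk_left _ _⟩
    · exact ⟨cb, uLim_spec cb, fun n => by
        rw [epPair_spec (cq n)]; exact Sym2.mem_mk_right _ _⟩
  set zn : ℕ → SPt := fun n => (sigmaS 3)^[m] (an n) with hzn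
  have hznt : Tendsto zn UF (nhds z) := by
    rw [← haz]
    exact (((aux_cont_sigmaS 3).iterate m).tendsto a).comp hant
  have hzorb : ∀ n, zn n ∈ critOrbit (cq n) := fun n => ⟨m, hm1, an n, hanmem n, rfl⟩
  have hzy2 : z ∈ Iarc s(uLim ya, uLim yb) := by rw [← hk₂eq]; exact hz2
  have hcrit' : IsCritChord s(uLim ya, uLim yb) := by rw [← hk₂eq]; exact hk₂crit
  have hIarc := aux_iarc_stable (fun n => epPair_spec (yq n)) (uLim_spec ya) (uLim_spec yb)
    hcrit' hznt hzy2
  obtain ⟨n, hn1, hn2⟩ := (hIarc.and hev).exists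
  have hmem : zn n ∈ critOrbit (cq n) ∩ Iarc (yq n) := ⟨hzorb n, hn1⟩
  rw [hn2] at hmem
  exact Set.notMem_empty _ hmem

lemma aux_weak_limit {Q : ℕ → Portrait} {K : Portrait}
    (hw : ∀ n, IsWeak (Q n)) (hK : K ∈ CrP)
    (hconv : Tendsto (fun n => portraitDist (Q n) K) UF (nhds 0)) : IsWeak K := by
  classical
  obtain ⟨k₁, k₂, hKe, hk₁crit, hk₂crit, _⟩ := id hK
  have hQdec : ∀ n, ∃ cyn : Chord × Chord, Q n = s(cyn.1, cyn.2) ∧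
      (critOrbit cyn.1 ∩ Iarc cyn.2 = ∅ ∨ critOrbit cyn.2 ∩ Iarc cyn.1 = ∅) := by
    intro n
    obtain ⟨_, c, y, hcy, hd⟩ := hw n
    exact ⟨(c, y), hcy, hd⟩
  choose cyn hcyn1 hcyn2 using hQdec
  rw [hKe] at hconv
  obtain ⟨p', q', hp'e, hp'conv, hq'conv⟩ := aux_portrait_split hcyn1 hconv
  have hsplit : ∀ n, (p' n = (cyn n).1 ∧ q' n = (cyn n).2) ∨
      (p' n = (cyn n).2 ∧ q' n = (cyn n).1) := by
    intro n
    have h : s(p' n, q' n) = s((cyn n).1, (cyn n).2) := by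
      rw [← hp'e n, ← hcyn1 n]
    rw [Sym2.eq_iff] at h
    exact h
  have hdisj : ∀ᶠ n in (UF : Filter ℕ),
      (critOrbit (p' n) ∩ Iarc (q' n) = ∅) ∨ (critOrbit (q' n) ∩ Iarc (p' n) = ∅) := by
    filter_upwards [] with n
    rcases hsplit n with ⟨h1, h2⟩ | ⟨h1, h2⟩ <;> rcases hcyn2 n with hd | hd
    · exact Or.inl (by rw [h1, h2]; exact hd)
    · exact Or.inr (by rw [h1, h2]; exact hd)
    · exact Or.inr (by rw [h1, h2]; exact hd)
    · exact Or.inl (by rw [h1, h2]; exact hd)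
  rcases Ultrafilter.eventually_or.mp hdisj with hev | hev
  · exact ⟨hK, k₁, k₂, hKe, Or.inl (aux_orbit_iarc_limit hp'conv hq'conv hk₂crit hev)⟩
  · exact ⟨hK, k₁, k₂, hKe, Or.inr (aux_orbit_iarc_limit hq'conv hp'conv hk₁crit hev)⟩

end Stmt18Aux11

/-- a limit in `CrP` of prime critical portraits is prime. -/
theorem stmt18 (Ki : ℕ → Portrait) (K : Portrait) (hK : K ∈ CrP)
    (hprime : ∀ i, IsPrime (Ki i)) (hconv : PortraitTendsto Ki K) :
    IsPrime K := by
  classical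
  choose K1 K2 hf1 hf2 hwk using hprime
  choose NL hNL1 hNL2 hKiCC hK1CC using hf1
  choose ML hML1 hML2 hK1CC' hK2CC using hf2
  have hconvU : Filter.Tendsto (fun n => portraitDist (Ki n) K) UF (nhds 0) :=
    hconv.mono_left UF_le_atTop
  obtain ⟨K', hFr1, hK'crp, hQconv⟩ :=
    aux_main (fun n => ⟨hNL1 n, hNL2 n⟩) hKiCC hK1CC hK hconvU
  obtain ⟨K'', hFr2, hK''crp, hQ2conv⟩ :=
    aux_main (fun n => ⟨hML1 n, hML2 n⟩) hK1CC' hK2CC hK'crp hQconv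
  exact ⟨K', K'', hFr1, hFr2, aux_weak_limit hwk hK''crp hQ2conv⟩
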